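/- arXiv:0903.4965 — 7 statements merged into one kernel-verified Lean document; each statement's English description precedes it below -/
import Mathlib

section
/- Let p be a prime, r ≥ 1, and a_1 ≥ a_2 ≥ ⋯ ≥ a_r ≥ 1 integers; write a = a_1, let s be the number of indices j with a_j = a, and v = ∑_{j=2}^{r} (a_j − 1). Then E(p^{a_1}, p^{a_2}, …, p^{a_r}) = (p−1)^{r−s+1} · p^{v} · h_s(p), where h_s(x) = ((x−1)^{s−1} + (−1)^s)/x. -/
/-- The von Sterneck function `Φ(k,n) = μ(n/gcd(k,n)) * φ(n) / φ(n/gcd(k,n))`. -/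
noncomputable def vonSterneck (k n : ℕ) : ℚ :=
  (ArithmeticFunction.moebius (n / Nat.gcd k n) : ℚ) * (Nat.totient n : ℚ) /
    (Nat.totient (n / Nat.gcd k n) : ℚ)

/-- The orbicyclic function `E(m_1,…,m_r)`. -/
noncomputable def orbE {r : ℕ} (m : Fin r → ℕ) : ℚ :=
  (∑ k ∈ Finset.Icc 1 (Finset.univ.lcm m), ∏ j, vonSterneck k (m j)) /
    ((Finset.univ.lcm m : ℕ) : ℚ)

/-- The polynomial `h_s(x) = ((x-1)^(s-1) + (-1)^s)/x`. -/
noncomputable def hpoly (s : ℕ) (x : ℚ) : ℚ := ((x - 1) ^ (s - 1) + (-1) ^ s) / x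

lemma vS_top {p : ℕ} (hp : p.Prime) (b k : ℕ) (h : p ^ b ∣ k) :
    vonSterneck k (p ^ b) = (Nat.totient (p ^ b) : ℚ) := by
  unfold vonSterneck
  rw [Nat.gcd_eq_right h, Nat.div_self (pow_pos hp.pos b)]
  simp

lemma vS_mid {p : ℕ} (hp : p.Prime) (b : ℕ) (hb : 1 ≤ b) (k : ℕ)
    (h1 : p ^ (b - 1) ∣ k) (h2 : ¬ p ^ b ∣ k) :
    vonSterneck k (p ^ b) = -((p : ℚ) ^ (b - 1)) := by
  have hg : Nat.gcd k (p ^ b) = p ^ (b - 1) := by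
    obtain ⟨t, htb, ht⟩ := (Nat.dvd_prime_pow hp).mp (Nat.gcd_dvd_right k (p ^ b))
    have h3 : p ^ (b-1) ∣ p ^ t := Nat.dvd_gcd h1 (pow_dvd_pow p (Nat.sub_le b 1)) |>.trans ht.dvd
    have h4 : b - 1 ≤ t := (Nat.pow_dvd_pow_iff_le_right hp.one_lt).mp h3
    have h5 : t ≠ b := by
      rintro rfl
      exact h2 (ht ▸ Nat.gcd_dvd_left k (p ^ t))
    have : t = b - 1 := le_antisymm (by omega) h4
    rw [ht, this]
  unfold vonSterneck
  rw [hg]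
  have hd : p ^ b / p ^ (b-1) = p := by
    rw [Nat.pow_div (Nat.sub_le b 1) hp.pos, show b - (b-1) = 1 by omega, pow_one]
  rw [hd, ArithmeticFunction.moebius_apply_prime hp, Nat.totient_prime hp,
    Nat.totient_prime_pow hp (by omega : 0 < b)]
  have hcast : ((p - 1 : ℕ) : ℚ) = (p : ℚ) - 1 := by
    have := hp.one_lt; push_cast [Nat.cast_sub (by omega : 1 ≤ p)]; ring
  have hne : (p : ℚ) - 1 ≠ 0 := by
    have : (1:ℚ) < p := by exact_mod_cast hp.one_lt
    linarith
  push_cast [hcast]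
  field_simp

lemma vS_zero {p : ℕ} (hp : p.Prime) (b : ℕ) (hb : 1 ≤ b) (k : ℕ)
    (h1 : ¬ p ^ (b - 1) ∣ k) :
    vonSterneck k (p ^ b) = 0 := by
  obtain ⟨t, htb, ht⟩ := (Nat.dvd_prime_pow hp).mp (Nat.gcd_dvd_right k (p ^ b))
  have h2 : t < b - 1 := by
    by_contra h
    exact h1 ((pow_dvd_pow p (by omega)).trans (ht ▸ Nat.gcd_dvd_left k (p ^ b)))
  unfold vonSterneck
  rw [ht, Nat.pow_div htb hp.pos, ArithmeticFunction.moebius_apply_prime_pow hp (by omega)]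
  rw [if_neg (by omega)]
  simp

theorem orbE_prime_pow (p r : ℕ) (hp : p.Prime) (hr : 1 ≤ r) (a : Fin r → ℕ)
    (ha : ∀ j, 1 ≤ a j) (hmono : Antitone a) :
    orbE (fun j => p ^ a j) =
      ((p : ℚ) - 1) ^
          (r - (Finset.univ.filter fun j => a j = a ⟨0, hr⟩).card + 1) *
        (p : ℚ) ^ (∑ j ∈ Finset.univ.erase ⟨0, hr⟩, (a j - 1)) *
        hpoly (Finset.univ.filter fun j => a j = a ⟨0, hr⟩).card (p : ℚ) := by
  classical
  have hp1 : 1 < p := hp.one_lt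
  set i0 : Fin r := ⟨0, hr⟩ with hi0
  set a0 := a i0 with ha0def
  have ha0 : 1 ≤ a0 := ha i0
  have haj : ∀ j, a j ≤ a0 := fun j => hmono (Fin.le_def.mpr (Nat.zero_le _))
  set s := (Finset.univ.filter fun j => a j = a0).card with hsdef
  have hs1 : 1 ≤ s := Finset.card_pos.mpr ⟨i0, by simp [ha0def]⟩
  have hsr : s ≤ r := by
    simpa using Finset.card_filter_le Finset.univ (fun j => a j = a0)
  have hq0 : (p:ℚ) ≠ 0 := Nat.cast_ne_zero.mpr hp.pos.ne'
  have hq1 : (p:ℚ) - 1 ≠ 0 := by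
    have : (1:ℚ) < p := by exact_mod_cast hp1
    linarith
  have hc1 : ((p - 1 : ℕ) : ℚ) = (p : ℚ) - 1 := by
    push_cast [Nat.cast_sub (by omega : 1 ≤ p)]; ring
  have hpow : p ^ (a0-1) * p = p ^ a0 := by
    rw [← pow_succ]; congr 1; omega
  have hlcm : Finset.univ.lcm (fun j => p ^ a j) = p ^ a0 := by
    apply Nat.dvd_antisymm
    · exact Finset.lcm_dvd fun j _ => pow_dvd_pow p (haj j)
    · exact Finset.dvd_lcm (Finset.mem_univ i0)
  unfold orbE
  rw [hlcm]
  set V := ∑ j : Fin r, (a j - 1) with hVdef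
  set v := ∑ j ∈ Finset.univ.erase i0, (a j - 1) with hvdef
  have hVv : V = (a0 - 1) + v := by
    rw [hVdef, hvdef, ← Finset.add_sum_erase _ _ (Finset.mem_univ i0)]
  -- kill the terms not divisible by p^(a0-1)
  rw [← Finset.sum_filter_add_sum_filter_not (Finset.Icc 1 (p^a0)) (fun k => p^(a0-1) ∣ k)]
  have hzero : ∑ k ∈ (Finset.Icc 1 (p^a0)).filter (fun k => ¬ p^(a0-1) ∣ k),
      ∏ j, vonSterneck k (p ^ a j) = 0 := by
    apply Finset.sum_eq_zero
    intro k hk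
    rw [Finset.mem_filter] at hk
    exact Finset.prod_eq_zero (Finset.mem_univ i0) (vS_zero hp a0 ha0 k hk.2)
  rw [hzero, add_zero]
  -- reindex as image
  have himg : (Finset.Icc 1 (p ^ a0)).filter (fun k => p ^ (a0-1) ∣ k)
      = (Finset.Icc 1 p).image (fun c => p ^ (a0-1) * c) := by
    ext k
    simp only [Finset.mem_filter, Finset.mem_Icc, Finset.mem_image]
    constructor
    · rintro ⟨⟨hk1, hk2⟩, c, rfl⟩
      refine ⟨c, ⟨?_, ?_⟩, rfl⟩
      · rcases Nat.eq_zero_or_pos c with rfl | h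
        · simp at hk1
        · exact h
      · rw [← hpow] at hk2
        exact Nat.le_of_mul_le_mul_left hk2 (pow_pos hp.pos _)
    · rintro ⟨c, ⟨hc1', hc2⟩, rfl⟩
      refine ⟨⟨?_, ?_⟩, ⟨c, rfl⟩⟩
      · have := pow_pos hp.pos (a0-1); nlinarith
      · rw [← hpow]
        exact Nat.mul_le_mul_left _ hc2
  rw [himg, Finset.sum_image (fun x _ y _ h => Nat.eq_of_mul_eq_mul_left (pow_pos hp.pos _) h)]
  -- split off c = p
  have hins : Finset.Icc 1 p = insert p (Finset.Icc 1 (p-1)) := by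
    ext x
    simp only [Finset.mem_Icc, Finset.mem_insert]
    omega
  rw [hins, Finset.sum_insert (by simp only [Finset.mem_Icc]; omega)]
  -- the top term
  have htop : ∏ j, vonSterneck (p ^ (a0-1) * p) (p ^ a j)
      = ((p:ℚ)-1) ^ r * (p:ℚ) ^ V := by
    have h1 : ∀ j : Fin r, vonSterneck (p ^ (a0-1) * p) (p ^ a j)
        = (p:ℚ)^(a j - 1) * ((p:ℚ)-1) := by
      intro j
      rw [vS_top hp _ _ (hpow ▸ pow_dvd_pow p (haj j) : p ^ a j ∣ p ^ (a0-1) * p),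
        Nat.totient_prime_pow hp (ha j)]
      push_cast [hc1]
      ring
    rw [Finset.prod_congr rfl (fun j _ => h1 j), Finset.prod_mul_distrib,
      Finset.prod_pow_eq_pow_sum, Finset.prod_const, Finset.card_univ, Fintype.card_fin,
      ← hVdef]
    ring
  rw [htop]
  -- the middle terms
  have hmid : ∀ c ∈ Finset.Icc 1 (p-1), ∏ j, vonSterneck (p ^ (a0-1) * c) (p ^ a j)
      = (-1:ℚ)^s * ((p:ℚ)-1)^(r-s) * (p:ℚ) ^ V := by
    intro c hc
    simp only [Finset.mem_Icc] at hc
    have hpc : ¬ p ∣ c := Nat.not_dvd_of_pos_of_lt (by omega) (by omega)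
    have hstep : ∀ j : Fin r, vonSterneck (p ^ (a0-1) * c) (p ^ a j)
        = if a j = a0 then -((p:ℚ)^(a0-1)) else (p:ℚ)^(a j -1)*((p:ℚ)-1) := by
      intro j
      by_cases hja : a j = a0
      · rw [if_pos hja, hja]
        apply vS_mid hp a0 ha0
        · exact Dvd.intro c rfl
        · intro hdvd
          rw [← hpow] at hdvd
          exact hpc ((mul_dvd_mul_iff_left (pow_ne_zero (a0-1) hp.pos.ne')).mp hdvd)
      · rw [if_neg hja]
        have hle : a j ≤ a0 - 1 := by have := haj j; omega
        rw [vS_top hp _ _ ((pow_dvd_pow p hle).trans (Dvd.intro c rfl)),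
          Nat.totient_prime_pow hp (ha j)]
        push_cast [hc1]
        ring
    rw [Finset.prod_congr rfl (fun j _ => hstep j), Finset.prod_ite]
    rw [Finset.prod_const, Finset.prod_mul_distrib, Finset.prod_const,
      Finset.prod_pow_eq_pow_sum]
    have hcards : (Finset.univ.filter fun j => ¬ a j = a0).card = r - s := by
      have := Finset.card_filter_add_card_filter_not
        (s := (Finset.univ : Finset (Fin r))) (p := fun j => a j = a0)
      simp only [Finset.card_univ, Fintype.card_fin] at this
      omega
    have hsums : V = s * (a0 - 1) + ∑ j ∈ Finset.univ.filter (fun j => ¬ a j = a0), (a j - 1) := by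
      rw [hVdef, ← Finset.sum_filter_add_sum_filter_not Finset.univ (fun j => a j = a0)]
      congr 1
      rw [Finset.sum_congr rfl (fun j hj => by
        rw [(Finset.mem_filter.mp hj).2]), Finset.sum_const, smul_eq_mul, ← hsdef]
    rw [← hsdef, hcards, hsums, pow_add, pow_mul, neg_pow ((p:ℚ)^(a0-1)) s]
    ring
  rw [Finset.sum_congr rfl hmid, Finset.sum_const, Nat.card_Icc, nsmul_eq_mul]
  have hcc : ((p - 1 + 1 - 1 : ℕ) : ℚ) = (p:ℚ) - 1 := by
    rw [show p - 1 + 1 - 1 = p - 1 from by omega, hc1]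
  rw [hcc, hpoly]
  -- final algebra
  rw [hVv, pow_add]
  rw [show ((p:ℚ)-1)^r = ((p:ℚ)-1)^(r-s) * ((p:ℚ)-1)^(s-1) * ((p:ℚ)-1) from by
    have h : (r-s)+(s-1)+1 = r := by omega
    conv_lhs => rw [← h]
    rw [pow_add, pow_add, pow_one]]
  rw [show ((p:ℚ)-1)^(r-s+1) = ((p:ℚ)-1)^(r-s) * ((p:ℚ)-1) from pow_succ _ _]
  rw [show ((p^a0 : ℕ):ℚ) = (p:ℚ)^(a0-1) * p from by rw [← hpow]; push_cast; ring]
  have hpne : (p:ℚ) ^ (a0-1) ≠ 0 := pow_ne_zero _ hq0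
  field_simp
end

section
/- Let p be a prime, r ≥ 1, and a_1 ≥ a_2 ≥ ⋯ ≥ a_r ≥ 1 integers; let s be the number of indices j with a_j = a_1. Then E(p^{a_1}, p^{a_2}, …, p^{a_r}) = 0 if and only if s = 1, or p = 2 and s is odd. -/
lemma vs_dvd {p : ℕ} (hp : p.Prime) (a k : ℕ) (h : p ^ a ∣ k) :
    vonSterneck k (p ^ a) = (Nat.totient (p ^ a) : ℚ) := by
  have hg : Nat.gcd k (p ^ a) = p ^ a := Nat.gcd_eq_right h
  simp [vonSterneck, hg, Nat.div_self (pow_pos hp.pos a)]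

lemma vs_mid {p : ℕ} (hp : p.Prime) (a k : ℕ) (ha : 1 ≤ a)
    (h1 : p ^ (a - 1) ∣ k) (h2 : ¬ p ^ a ∣ k) :
    vonSterneck k (p ^ a) = -((p : ℚ) ^ (a - 1)) := by
  have hg : Nat.gcd k (p ^ a) = p ^ (a - 1) := by
    obtain ⟨i, hi, hgi⟩ := (Nat.dvd_prime_pow hp).mp (Nat.gcd_dvd_right k (p ^ a))
    have hd : p ^ (a - 1) ∣ p ^ i := hgi ▸ Nat.dvd_gcd h1 (pow_dvd_pow p (Nat.sub_le a 1))
    have hle : a - 1 ≤ i := (Nat.pow_dvd_pow_iff_le_right hp.one_lt).mp hd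
    have hne : i ≠ a := by
      intro hEq
      rw [hEq] at hgi
      exact h2 (hgi ▸ Nat.gcd_dvd_left k (p ^ a))
    have : i = a - 1 := le_antisymm (by omega) hle
    rw [hgi, this]
  have hdiv : p ^ a / p ^ (a - 1) = p := by
    rw [Nat.pow_div (Nat.sub_le a 1) hp.pos]
    simp [Nat.sub_sub_self ha]
  rw [vonSterneck, hg, hdiv, ArithmeticFunction.moebius_apply_prime hp,
    Nat.totient_prime hp, Nat.totient_prime_pow hp ha]
  have : ((p : ℚ) - 1) ≠ 0 := by
    have := hp.two_le
    have : (2:ℚ) ≤ p := by exact_mod_cast this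
    linarith
  push_cast [Nat.cast_sub hp.one_le]
  field_simp

lemma vs_zero {p : ℕ} (hp : p.Prime) (a k : ℕ) (h : ¬ p ^ (a - 1) ∣ k) :
    vonSterneck k (p ^ a) = 0 := by
  obtain ⟨i, hi, hgi⟩ := (Nat.dvd_prime_pow hp).mp (Nat.gcd_dvd_right k (p ^ a))
  have hi2 : i + 2 ≤ a := by
    by_contra hcon
    -- then i ≥ a - 1, so p^(a-1) ∣ gcd ∣ k
    have : a - 1 ≤ i := by omega
    exact h ((pow_dvd_pow p this).trans (hgi ▸ Nat.gcd_dvd_left k (p ^ a)))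
  have hdiv : p ^ a / Nat.gcd k (p ^ a) = p ^ (a - i) := by
    rw [hgi, Nat.pow_div hi hp.pos]
  have hns : ¬ Squarefree (p ^ (a - i)) := by
    intro hs
    have : p * p ∣ p ^ (a - i) := by
      have : p ^ 2 ∣ p ^ (a - i) := pow_dvd_pow p (by omega)
      simpa [sq] using this
    exact hp.not_isUnit (hs p this)
  rw [vonSterneck, hdiv, ArithmeticFunction.moebius_eq_zero_of_not_squarefree hns]
  simp

lemma key_iff {p s : ℕ} (hp : p.Prime) (hs : 1 ≤ s) :
    ((p:ℚ) - 1) ^ (s - 1) + (-1) ^ s = 0 ↔ s = 1 ∨ (p = 2 ∧ Odd s) := by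
  have hp2 : (2:ℚ) ≤ (p:ℚ) := by exact_mod_cast hp.two_le
  constructor
  · intro h
    rcases Nat.even_or_odd s with he | ho
    · exfalso
      rw [he.neg_one_pow] at h
      have h1 : (1:ℚ) ≤ ((p:ℚ) - 1) ^ (s - 1) := one_le_pow₀ (by linarith)
      linarith
    · rw [ho.neg_one_pow] at h
      have hps : ((p:ℚ) - 1) ^ (s - 1) = 1 := by linarith
      by_cases h1 : s = 1
      · exact Or.inl h1
      · refine Or.inr ⟨?_, ho⟩
        by_contra hpne
        have hp3 : 3 ≤ p := by
          rcases hp.eq_two_or_odd' with h2 | hodd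
          · exact absurd h2 hpne
          · have := hp.two_le; omega
        have hp3' : (3:ℚ) ≤ (p:ℚ) := by exact_mod_cast hp3
        have : (2:ℚ) ≤ ((p:ℚ) - 1) ^ (s - 1) :=
          le_trans (by linarith) (le_self_pow₀ (by linarith) (by omega))
        linarith
  · rintro (rfl | ⟨rfl, ho⟩)
    · norm_num
    · rw [ho.neg_one_pow]
      norm_num
theorem orbE_prime_pow_eq_zero_iff (p r : ℕ) (hp : p.Prime) (hr : 1 ≤ r) (a : Fin r → ℕ)
    (ha : ∀ j, 1 ≤ a j) (hmono : Antitone a) :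
    orbE (fun j => p ^ a j) = 0 ↔
      (Finset.univ.filter fun j => a j = a ⟨0, hr⟩).card = 1 ∨
        (p = 2 ∧ Odd (Finset.univ.filter fun j => a j = a ⟨0, hr⟩).card) := by
  set A := a ⟨0, hr⟩ with hA
  have hA1 : 1 ≤ A := ha _
  have hmax : ∀ j, a j ≤ A := fun j => hmono (Fin.mk_le_of_le_val (Nat.zero_le _))
  have hp0 : 0 < p := hp.pos
  have hpA1 : 0 < p ^ (A - 1) := pow_pos hp0 _
  have hmul : p ^ (A - 1) * p = p ^ A := by
    rw [← pow_succ]; congr 1; omega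
  have hlcm : (Finset.univ.lcm fun j => p ^ a j) = p ^ A := by
    apply Nat.dvd_antisymm
    · exact Finset.lcm_dvd fun j _ => pow_dvd_pow p (hmax j)
    · exact Finset.dvd_lcm (Finset.mem_univ (⟨0, hr⟩ : Fin r))
  set F := Finset.univ.filter (fun j => a j = A) with hF
  set s := F.card with hscard
  have hsmem : (⟨0, hr⟩ : Fin r) ∈ F := by simp [hF, hA]
  have hs1 : 1 ≤ s := Finset.card_pos.mpr ⟨_, hsmem⟩
  set g : ℕ → ℚ := fun k => ∏ j, vonSterneck k (p ^ a j) with hg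
  set C : ℚ := ∏ j ∈ Finset.univ.filter (fun j => ¬ a j = A), (Nat.totient (p ^ a j) : ℚ)
    with hCdef
  have hC : 0 < C := Finset.prod_pos fun j _ => by
    exact_mod_cast Nat.totient_pos.mpr (pow_pos hp0 _)
  -- step 1 : restrict the sum
  have hinj : ∀ x ∈ Finset.Icc 1 p, ∀ y ∈ Finset.Icc 1 p,
      x * p ^ (A - 1) = y * p ^ (A - 1) → x = y :=
    fun x _ y _ h => Nat.eq_of_mul_eq_mul_right hpA1 h
  have himg : (Finset.Icc 1 p).image (fun t => t * p ^ (A - 1)) ⊆ Finset.Icc 1 (p ^ A) := by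
    intro k hk
    simp only [Finset.mem_image, Finset.mem_Icc] at hk ⊢
    obtain ⟨t, ⟨ht1, ht2⟩, rfl⟩ := hk
    refine ⟨Nat.one_le_iff_ne_zero.mpr (by positivity), ?_⟩
    calc t * p ^ (A - 1) ≤ p * p ^ (A - 1) := Nat.mul_le_mul_right _ ht2
      _ = p ^ A := by rw [mul_comm, hmul]
  have hstep1 : ∑ k ∈ Finset.Icc 1 (p ^ A), g k
      = ∑ t ∈ Finset.Icc 1 p, g (t * p ^ (A - 1)) := by
    rw [← Finset.sum_image (f := g) hinj]
    symm
    apply Finset.sum_subset himg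
    intro k hk hk2
    simp only [Finset.mem_Icc] at hk
    have hnd : ¬ p ^ (A - 1) ∣ k := by
      intro hd
      obtain ⟨t, rfl⟩ := hd
      apply hk2
      simp only [Finset.mem_image, Finset.mem_Icc]
      refine ⟨t, ⟨?_, ?_⟩, mul_comm _ _⟩
      · rcases Nat.eq_zero_or_pos t with rfl | h
        · simp at hk
        · exact h
      · by_contra hc
        have : p ^ (A - 1) * (p + 1) ≤ p ^ (A - 1) * t :=
          Nat.mul_le_mul_left _ (by omega)
        have h2 : p ^ (A - 1) * t ≤ p ^ A := hk.2
        nlinarith [hmul]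
    have hz : vonSterneck k (p ^ a ⟨0, hr⟩) = 0 := vs_zero hp _ _ hnd
    exact Finset.prod_eq_zero (Finset.mem_univ (⟨0, hr⟩ : Fin r)) hz
  -- value at k = p^A
  have hgtop : g (p ^ A) = ((p ^ (A - 1) * (p - 1) : ℕ) : ℚ) ^ s * C := by
    have h1 : g (p ^ A) = ∏ j, (Nat.totient (p ^ a j) : ℚ) :=
      Finset.prod_congr rfl fun j _ => vs_dvd hp _ _ (pow_dvd_pow p (hmax j))
    rw [h1, ← Finset.prod_filter_mul_prod_filter_not Finset.univ (fun j => a j = A)]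
    congr 1
    rw [← hF]
    rw [Finset.prod_congr rfl (fun j hj => ?_), Finset.prod_const, hscard]
    have hjA : a j = A := by simpa [hF] using hj
    rw [hjA, Nat.totient_prime_pow hp hA1]
  -- value at k = t * p^(A-1), t < p
  have hgmid : ∀ t ∈ Finset.Icc 1 (p - 1),
      g (t * p ^ (A - 1)) = (-((p : ℚ) ^ (A - 1))) ^ s * C := by
    intro t ht
    simp only [Finset.mem_Icc] at ht
    have hnotdvd : ¬ p ^ A ∣ t * p ^ (A - 1) := by
      intro hd
      obtain ⟨c, hc⟩ := hd
      rw [← hmul] at hc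
      have htc : t = p * c := by
        have : t * p ^ (A - 1) = (p * c) * p ^ (A - 1) := by rw [hc]; ring
        exact Nat.eq_of_mul_eq_mul_right hpA1 this
      rcases Nat.eq_zero_or_pos c with rfl | hcp
      · omega
      · have hpt : p ≤ t := by
          calc p = p * 1 := (mul_one p).symm
            _ ≤ p * c := Nat.mul_le_mul_left p hcp
            _ = t := htc.symm
        have := hp.two_le
        omega
    show (∏ j : Fin r, vonSterneck (t * p ^ (A - 1)) (p ^ a j)) = (-((p : ℚ) ^ (A - 1))) ^ s * C
    rw [← Finset.prod_filter_mul_prod_filter_not Finset.univ (fun j => a j = A), ← hF]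
    congr 1
    · rw [Finset.prod_congr rfl (fun j hj => ?_), Finset.prod_const, hscard]
      have hjA : a j = A := by simpa [hF] using hj
      rw [hjA]
      exact vs_mid hp A _ hA1 (Dvd.intro t (mul_comm _ _)) hnotdvd
    · refine Finset.prod_congr rfl fun j hj => ?_
      have hjA : a j ≠ A := by simpa [hF] using hj
      have hle : a j ≤ A - 1 := by have := hmax j; omega
      exact vs_dvd hp _ _ ((pow_dvd_pow p hle).trans (Dvd.intro t (mul_comm _ _)))
  -- assemble the sum
  have hIcc : Finset.Icc 1 p = insert p (Finset.Icc 1 (p - 1)) := by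
    ext x
    simp only [Finset.mem_Icc, Finset.mem_insert]
    have := hp.two_le
    omega
  have hnotmem : p ∉ Finset.Icc 1 (p - 1) := by
    simp only [Finset.mem_Icc]
    have := hp.two_le
    omega
  have hsum : ∑ k ∈ Finset.Icc 1 (p ^ A), g k
      = ((p ^ (A - 1) * (p - 1) : ℕ) : ℚ) ^ s * C
        + ((p - 1 : ℕ) : ℚ) * ((-((p : ℚ) ^ (A - 1))) ^ s * C) := by
    rw [hstep1, hIcc, Finset.sum_insert hnotmem, mul_comm p (p ^ (A - 1)), hmul, hgtop,
      Finset.sum_congr rfl hgmid, Finset.sum_const, Nat.card_Icc]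
    simp [nsmul_eq_mul]
  -- final computation
  have hlcmQ : ((p : ℚ) ^ A) ≠ 0 := by positivity
  rw [orbE, hlcm]
  push_cast
  rw [div_eq_zero_iff]
  have hPm1 : ((p : ℚ) - 1) ≠ 0 := by
    have : (2:ℚ) ≤ (p:ℚ) := by exact_mod_cast hp.two_le
    linarith
  have hfact : (∑ k ∈ Finset.Icc 1 (p ^ A), g k)
      = C * ((p : ℚ) ^ (A - 1)) ^ s * ((p : ℚ) - 1)
        * (((p : ℚ) - 1) ^ (s - 1) + (-1) ^ s) := by
    rw [hsum]
    push_cast [Nat.cast_sub hp.one_le]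
    have hss : s - 1 + 1 = s := by omega
    rw [mul_pow, neg_pow]
    calc ((p:ℚ) ^ (A-1)) ^ s * ((p:ℚ) - 1) ^ s * C
          + ((p:ℚ) - 1) * ((-1) ^ s * ((p:ℚ) ^ (A-1)) ^ s * C)
        = ((p:ℚ) ^ (A-1)) ^ s * (((p:ℚ) - 1) ^ (s-1+1)) * C
          + ((p:ℚ) - 1) * ((-1) ^ s * ((p:ℚ) ^ (A-1)) ^ s * C) := by rw [hss]
      _ = C * ((p : ℚ) ^ (A - 1)) ^ s * ((p : ℚ) - 1)
          * (((p : ℚ) - 1) ^ (s - 1) + (-1) ^ s) := by ring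
  rw [hfact]
  have hne : C * ((p : ℚ) ^ (A - 1)) ^ s * ((p : ℚ) - 1) ≠ 0 := by
    have h1 : ((p : ℚ) ^ (A - 1)) ^ s ≠ 0 := by positivity
    exact mul_ne_zero (mul_ne_zero (ne_of_gt hC) h1) hPm1
  constructor
  · rintro (h | h)
    · rcases mul_eq_zero.mp h with h2 | h2
      · exact absurd h2 hne
      · exact (key_iff hp hs1).mp h2
    · exact absurd h hlcmQ
  · intro h
    exact Or.inl (by rw [(key_iff hp hs1).mpr h, mul_zero])
end

section
/- Let f : ℕ × ℕ → ℚ be a function such that for each positive integer n, f(·,n) is periodic in its first argument modulo n (f(k₁,n) = f(k₂,n) whenever k₁ ≡ k₂ (mod n)), and such that f(k, n₁n₂) = f(k,n₁)·f(k,n₂) for every k and all coprime positive integers n₁, n₂. For a tuple of positive integers (m_1,…,m_r), r ≥ 1, define F(m_1,…,m_r) = (1/M)·∑_{k=1}^{M} f(k,m_1)·f(k,m_2)·⋯·f(k,m_r), where M = m_1·m_2·⋯·m_r. Then whenever m_j = m_j'·m_j'' for j = 1,…,r with gcd(∏_j m_j', ∏_j m_j'') = 1, one has F(m_1,…,m_r)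 = F(m_1',…,m_r') · F(m_1'',…,m_r''). -/
/-- Shift an `Icc 1 N` sum of an `N`-periodic-ish function to a `range N` sum. -/
lemma sum_Icc_one_eq_sum_range (h : ℕ → ℚ) (N : ℕ) (hN : 0 < N) (hh : h N = h 0) :
    ∑ k ∈ Finset.Icc 1 N, h k = ∑ k ∈ Finset.range N, h k := by
  have h1 : Finset.Icc 1 N = Finset.Ico 1 (N + 1) := by
    rw [Finset.Ico_add_one_right_eq_Icc]
  rw [h1, Finset.range_eq_Ico, Finset.sum_Ico_succ_top hN,
    Finset.sum_eq_sum_Ico_succ_bot hN]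
  rw [hh]; ring

theorem semiMultiplicative_of_periodic (f : ℕ → ℕ → ℚ)
    (hper : ∀ n : ℕ, 0 < n → ∀ k₁ k₂ : ℕ, k₁ % n = k₂ % n → f k₁ n = f k₂ n)
    (hmul : ∀ k n₁ n₂ : ℕ, 0 < n₁ → 0 < n₂ → Nat.Coprime n₁ n₂ →
      f k (n₁ * n₂) = f k n₁ * f k n₂)
    (r : ℕ) (hr : 1 ≤ r) (m' m'' : Fin r → ℕ)
    (hm' : ∀ j, 0 < m' j) (hm'' : ∀ j, 0 < m'' j)
    (hcop : Nat.Coprime (∏ j, m' j) (∏ j, m'' j)) :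
    (∑ k ∈ Finset.Icc 1 (∏ j, (m' j * m'' j)), ∏ j, f k (m' j * m'' j)) /
        ((∏ j, (m' j * m'' j) : ℕ) : ℚ) =
      ((∑ k ∈ Finset.Icc 1 (∏ j, m' j), ∏ j, f k (m' j)) / ((∏ j, m' j : ℕ) : ℚ)) *
        ((∑ k ∈ Finset.Icc 1 (∏ j, m'' j), ∏ j, f k (m'' j)) / ((∏ j, m'' j : ℕ) : ℚ)) := by
  set M' := ∏ j, m' j with hM'
  set M'' := ∏ j, m'' j with hM''
  have hM'pos : 0 < M' := Finset.prod_pos fun j _ => hm' j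
  have hM''pos : 0 < M'' := Finset.prod_pos fun j _ => hm'' j
  set g' : ℕ → ℚ := fun k => ∏ j, f k (m' j) with hg'
  set g'' : ℕ → ℚ := fun k => ∏ j, f k (m'' j) with hg''
  -- coprimality of components
  have hcopj : ∀ j : Fin r, Nat.Coprime (m' j) (m'' j) := fun j =>
    Nat.Coprime.coprime_dvd_right (Finset.dvd_prod_of_mem _ (Finset.mem_univ j))
      (Nat.Coprime.coprime_dvd_left (Finset.dvd_prod_of_mem _ (Finset.mem_univ j)) hcop)
  -- product splits
  have hprod : ∀ k : ℕ, (∏ j, f k (m' j * m'' j)) = g' k * g'' k := by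
    intro k
    rw [hg', hg'', ← Finset.prod_mul_distrib]
    exact Finset.prod_congr rfl fun j _ => hmul k _ _ (hm' j) (hm'' j) (hcopj j)
  have hMprod : (∏ j, (m' j * m'' j)) = M' * M'' := by
    rw [hM', hM'', Finset.prod_mul_distrib]
  -- periodicity of g', g''
  have hper' : ∀ k₁ k₂ : ℕ, k₁ % M' = k₂ % M' → g' k₁ = g' k₂ := by
    intro k₁ k₂ h
    refine Finset.prod_congr rfl fun j _ => hper _ (hm' j) _ _ ?_
    have hd : m' j ∣ M' := Finset.dvd_prod_of_mem _ (Finset.mem_univ j)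
    calc k₁ % m' j = k₁ % M' % m' j := (Nat.mod_mod_of_dvd _ hd).symm
      _ = k₂ % M' % m' j := by rw [h]
      _ = k₂ % m' j := Nat.mod_mod_of_dvd _ hd
  have hper'' : ∀ k₁ k₂ : ℕ, k₁ % M'' = k₂ % M'' → g'' k₁ = g'' k₂ := by
    intro k₁ k₂ h
    refine Finset.prod_congr rfl fun j _ => hper _ (hm'' j) _ _ ?_
    have hd : m'' j ∣ M'' := Finset.dvd_prod_of_mem _ (Finset.mem_univ j)
    calc k₁ % m'' j = k₁ % M'' % m'' j := (Nat.mod_mod_of_dvd _ hd).symm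
      _ = k₂ % M'' % m'' j := by rw [h]
      _ = k₂ % m'' j := Nat.mod_mod_of_dvd _ hd
  -- main sum identity
  have hkey : ∑ k ∈ Finset.range (M' * M''), g' k * g'' k =
      (∑ a ∈ Finset.range M', g' a) * (∑ b ∈ Finset.range M'', g'' b) := by
    rw [Finset.sum_mul_sum, ← Finset.sum_product']
    refine Finset.sum_nbij' (fun k => (k % M', k % M''))
      (fun p => (Nat.chineseRemainder hcop p.1 p.2 : ℕ)) ?_ ?_ ?_ ?_ ?_
    · intro k hk
      simp only [Finset.mem_product, Finset.mem_range]
      exact ⟨Nat.mod_lt _ hM'pos, Nat.mod_lt _ hM''pos⟩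
    · intro p hp
      simp only [Finset.mem_range]
      exact Nat.chineseRemainder_lt_mul hcop p.1 p.2 hM'pos.ne' hM''pos.ne'
    · intro k hk
      simp only [Finset.mem_range] at hk
      have h1 : k ≡ k % M' [MOD M'] := (Nat.mod_modEq k M').symm
      have h2 : k ≡ k % M'' [MOD M''] := (Nat.mod_modEq k M'').symm
      have := Nat.chineseRemainder_modEq_unique hcop h1 h2
      have hlt : (Nat.chineseRemainder hcop (k % M') (k % M'') : ℕ) < M' * M'' :=
        Nat.chineseRemainder_lt_mul hcop _ _ hM'pos.ne' hM''pos.ne'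
      have := this.eq_of_lt_of_lt hk hlt
      exact this.symm
    · intro p hp
      simp only [Finset.mem_product, Finset.mem_range] at hp
      obtain ⟨h1, h2⟩ := (Nat.chineseRemainder hcop p.1 p.2).2
      have e1 : (Nat.chineseRemainder hcop p.1 p.2 : ℕ) % M' = p.1 := by
        rw [Nat.ModEq] at h1; rw [h1, Nat.mod_eq_of_lt hp.1]
      have e2 : (Nat.chineseRemainder hcop p.1 p.2 : ℕ) % M'' = p.2 := by
        rw [Nat.ModEq] at h2; rw [h2, Nat.mod_eq_of_lt hp.2]
      simp [e1, e2]
    · intro k hk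
      exact congrArg₂ (· * ·)
        (hper' k (k % M') (Nat.mod_mod_of_dvd _ dvd_rfl).symm)
        (hper'' k (k % M'') (Nat.mod_mod_of_dvd _ dvd_rfl).symm)
  -- rewrite Icc sums as range sums
  have hIcc : ∀ (h : ℕ → ℚ) (N : ℕ), 0 < N → (∀ k₁ k₂, k₁ % N = k₂ % N → h k₁ = h k₂) →
      ∑ k ∈ Finset.Icc 1 N, h k = ∑ k ∈ Finset.range N, h k := by
    intro h N hN hp
    exact sum_Icc_one_eq_sum_range h N hN (hp N 0 (by simp))
  have e0 : ∑ k ∈ Finset.Icc 1 (∏ j, (m' j * m'' j)), ∏ j, f k (m' j * m'' j)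
      = ∑ k ∈ Finset.range (M' * M''), g' k * g'' k := by
    rw [hMprod]
    rw [hIcc (fun k => ∏ j, f k (m' j * m'' j)) (M' * M'') (Nat.mul_pos hM'pos hM''pos) ?_]
    · exact Finset.sum_congr rfl fun k _ => hprod k
    · intro k₁ k₂ h
      have h' : k₁ % M' = k₂ % M' := by
        have : k₁ % (M' * M'') % M' = k₂ % (M' * M'') % M' := by rw [h]
        rwa [Nat.mod_mod_of_dvd _ (dvd_mul_right _ _),
          Nat.mod_mod_of_dvd _ (dvd_mul_right _ _)] at this
      have h'' : k₁ % M'' = k₂ % M'' := by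
        have : k₁ % (M' * M'') % M'' = k₂ % (M' * M'') % M'' := by rw [h]
        rwa [Nat.mod_mod_of_dvd _ (dvd_mul_left _ _),
          Nat.mod_mod_of_dvd _ (dvd_mul_left _ _)] at this
      calc (∏ j, f k₁ (m' j * m'' j)) = g' k₁ * g'' k₁ := hprod k₁
        _ = g' k₂ * g'' k₂ := by rw [hper' _ _ h', hper'' _ _ h'']
        _ = ∏ j, f k₂ (m' j * m'' j) := (hprod k₂).symm
  have e1 : ∑ k ∈ Finset.Icc 1 M', ∏ j, f k (m' j) = ∑ a ∈ Finset.range M', g' a :=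
    hIcc g' M' hM'pos hper'
  have e2 : ∑ k ∈ Finset.Icc 1 M'', ∏ j, f k (m'' j) = ∑ b ∈ Finset.range M'', g'' b :=
    hIcc g'' M'' hM''pos hper''
  rw [e0, e1, e2, hkey, hMprod]
  push_cast
  rw [div_mul_div_comm]
end

section
/- For any tuple of positive integers (m_1,…,m_r) with m = lcm(m_1,…,m_r): if m = 1 then E(m_1,…,m_r) = 1, and if m > 1 then E(m_1,…,m_r) = ∏_{p prime, p | m} E(p^{a_1(p)}, p^{a_2(p)}, …, p^{a_r(p)}), where a_j(p) is the exponent of p in m_j. In other words, E is a multiplicative multivariate arithmetic function. -/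
lemma vonSterneck_one (k : ℕ) : vonSterneck k 1 = 1 := by
  simp [vonSterneck]

lemma vonSterneck_mod {n N : ℕ} (h : n ∣ N) (k : ℕ) :
    vonSterneck (k % N) n = vonSterneck k n := by
  have hg : Nat.gcd (k % N) n = Nat.gcd k n := by
    rw [Nat.gcd_comm (k % N), Nat.gcd_rec n (k % N), Nat.mod_mod_of_dvd k h,
      ← Nat.gcd_rec n k, Nat.gcd_comm]
  rw [vonSterneck, vonSterneck, hg]

lemma vonSterneck_mul {a b : ℕ} (ha : 0 < a) (hb : 0 < b) (hab : Nat.Coprime a b) (k : ℕ) :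
    vonSterneck k (a * b) = vonSterneck k a * vonSterneck k b := by
  have hg : Nat.gcd k (a * b) = Nat.gcd k a * Nat.gcd k b := hab.gcd_mul k
  have hda : Nat.gcd k a ∣ a := Nat.gcd_dvd_right k a
  have hdb : Nat.gcd k b ∣ b := Nat.gcd_dvd_right k b
  have hq : a * b / (Nat.gcd k a * Nat.gcd k b) = (a / Nat.gcd k a) * (b / Nat.gcd k b) :=
    (Nat.div_mul_div_comm hda hdb).symm
  have hcop : Nat.Coprime (a / Nat.gcd k a) (b / Nat.gcd k b) :=
    Nat.Coprime.coprime_dvd_left (Nat.div_dvd_of_dvd hda)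
      (Nat.Coprime.coprime_dvd_right (Nat.div_dvd_of_dvd hdb) hab)
  have hpa : 0 < a / Nat.gcd k a :=
    Nat.div_pos (Nat.le_of_dvd ha hda) (Nat.gcd_pos_of_pos_right k ha)
  have hpb : 0 < b / Nat.gcd k b :=
    Nat.div_pos (Nat.le_of_dvd hb hdb) (Nat.gcd_pos_of_pos_right k hb)
  have hmu : ArithmeticFunction.moebius ((a / Nat.gcd k a) * (b / Nat.gcd k b)) =
      ArithmeticFunction.moebius (a / Nat.gcd k a) *
        ArithmeticFunction.moebius (b / Nat.gcd k b) :=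
    ArithmeticFunction.isMultiplicative_moebius.map_mul_of_coprime hcop
  have htot : Nat.totient (a * b) = Nat.totient a * Nat.totient b := Nat.totient_mul hab
  have htot' : Nat.totient ((a / Nat.gcd k a) * (b / Nat.gcd k b)) =
      Nat.totient (a / Nat.gcd k a) * Nat.totient (b / Nat.gcd k b) := Nat.totient_mul hcop
  have h1 : (Nat.totient (a / Nat.gcd k a) : ℚ) ≠ 0 := by
    exact_mod_cast (Nat.totient_pos.mpr hpa).ne'
  have h2 : (Nat.totient (b / Nat.gcd k b) : ℚ) ≠ 0 := by
    exact_mod_cast (Nat.totient_pos.mpr hpb).ne'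
  rw [vonSterneck, vonSterneck, vonSterneck, hg, hq, hmu, htot, htot']
  push_cast
  field_simp

lemma zmod_sum_val {n : ℕ} [NeZero n] (f : ℕ → ℚ) :
    ∑ x : ZMod n, f x.val = ∑ k ∈ Finset.range n, f k := by
  apply Finset.sum_nbij' (i := fun x : ZMod n => x.val) (j := fun k : ℕ => (k : ZMod n))
  · intro a _; exact Finset.mem_range.mpr (ZMod.val_lt a)
  · intro a _; exact Finset.mem_univ _
  · intro a _; exact ZMod.natCast_rightInverse a
  · intro a ha; exact ZMod.val_cast_of_lt (Finset.mem_range.mp ha)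
  · intro a _; rfl

lemma sum_Icc_eq_sum_range_of_periodic {n : ℕ} (hn : 0 < n) (f : ℕ → ℚ)
    (hf : ∀ k, f k = f (k % n)) :
    ∑ k ∈ Finset.Icc 1 n, f k = ∑ k ∈ Finset.range n, f k := by
  have h1 : Finset.Icc 1 n = Finset.Ico 1 (n + 1) := by rw [Finset.Ico_add_one_right_eq_Icc]
  have h2 : ∑ k ∈ Finset.Ico 0 (n + 1), f k
      = f 0 + ∑ k ∈ Finset.Ico 1 (n + 1), f k := by
    rw [Finset.sum_eq_sum_Ico_succ_bot (Nat.succ_pos n) f]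
  have h3 : ∑ k ∈ Finset.Ico 0 (n + 1), f k = (∑ k ∈ Finset.range n, f k) + f n := by
    rw [← Finset.range_eq_Ico, Finset.sum_range_succ]
  have h4 : f n = f 0 := by rw [hf n, Nat.mod_self]
  rw [h1]
  have := h2.symm.trans h3
  linarith

lemma crt_sum {a b : ℕ} (ha : 0 < a) (hb : 0 < b) (hab : Nat.Coprime a b)
    (F G : ℕ → ℚ) (hF : ∀ k, F k = F (k % a)) (hG : ∀ k, G k = G (k % b)) :
    ∑ k ∈ Finset.range (a * b), F k * G k
      = (∑ k ∈ Finset.range a, F k) * (∑ k ∈ Finset.range b, G k) := by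
  haveI : NeZero a := ⟨ha.ne'⟩
  haveI : NeZero b := ⟨hb.ne'⟩
  haveI : NeZero (a * b) := ⟨(Nat.mul_pos ha hb).ne'⟩
  set Fa : ZMod a → ℚ := fun u => F u.val with hFa
  set Gb : ZMod b → ℚ := fun u => G u.val with hGb
  have keyF : ∀ k : ℕ, F k = Fa (k : ZMod a) := by
    intro k; rw [hFa]; simp only [ZMod.val_natCast]; exact hF k
  have keyG : ∀ k : ℕ, G k = Gb (k : ZMod b) := by
    intro k; rw [hGb]; simp only [ZMod.val_natCast]; exact hG k
  have e := ZMod.chineseRemainder hab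
  calc ∑ k ∈ Finset.range (a * b), F k * G k
      = ∑ x : ZMod (a * b), F x.val * G x.val := (zmod_sum_val _).symm
    _ = ∑ x : ZMod (a * b), Fa ((e x).1) * Gb ((e x).2) := by
        refine Finset.sum_congr rfl fun x _ => ?_
        rw [keyF, keyG]
        have hx : (x.val : ZMod (a * b)) = x := ZMod.natCast_rightInverse x
        have gen : ∀ v : ℕ, e (v : ZMod (a * b)) = ((v : ZMod a), (v : ZMod b)) := by
          intro v
          rw [map_natCast e]
          exact Prod.ext (by simp) (by simp)
        have : e x = ((x.val : ZMod a), (x.val : ZMod b)) := by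
          conv_lhs => rw [← hx]
          exact gen x.val
        rw [this]
    _ = ∑ y : ZMod a × ZMod b, Fa y.1 * Gb y.2 :=
        Fintype.sum_bijective e e.bijective _ _ (fun _ => rfl)
    _ = (∑ u : ZMod a, Fa u) * (∑ v : ZMod b, Gb v) := by
        rw [Finset.sum_mul_sum, Fintype.sum_prod_type]
    _ = (∑ k ∈ Finset.range a, F k) * (∑ k ∈ Finset.range b, G k) := by
        rw [zmod_sum_val, zmod_sum_val]

lemma finset_lcm_ne_zero {ι : Type*} [DecidableEq ι] (s : Finset ι) (f : ι → ℕ)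
    (hf : ∀ i ∈ s, f i ≠ 0) : s.lcm f ≠ 0 := by
  induction s using Finset.induction_on with
  | empty => simp
  | @insert a s ha ih =>
    rw [Finset.lcm_insert, lcm_eq_nat_lcm]
    exact Nat.lcm_ne_zero (hf a (Finset.mem_insert_self a s))
      (ih fun i hi => hf i (Finset.mem_insert_of_mem hi))

lemma factorization_finset_lcm {ι : Type*} [DecidableEq ι] (s : Finset ι) (f : ι → ℕ)
    (hf : ∀ i ∈ s, f i ≠ 0) (p : ℕ) :
    (s.lcm f).factorization p = s.sup fun i => (f i).factorization p := by
  induction s using Finset.induction_on with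
  | empty => simp
  | @insert a s ha ih =>
    rw [Finset.lcm_insert, lcm_eq_nat_lcm, Finset.sup_insert,
      Nat.factorization_lcm (hf a (Finset.mem_insert_self a s))
        (finset_lcm_ne_zero s f fun i hi => hf i (Finset.mem_insert_of_mem hi)),
      Finsupp.sup_apply, ih fun i hi => hf i (Finset.mem_insert_of_mem hi)]

section split

variable {r : ℕ}

lemma lcm_ordCompl (m : Fin r → ℕ) (hm0 : ∀ j, m j ≠ 0) {p : ℕ} (hp : p.Prime) :
    Finset.univ.lcm (fun j => ordCompl[p] (m j)) = ordCompl[p] (Finset.univ.lcm m) := by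
  classical
  set M := Finset.univ.lcm m with hMdef
  have hM0 : M ≠ 0 := finset_lcm_ne_zero _ _ (fun j _ => hm0 j)
  set mc : Fin r → ℕ := fun j => ordCompl[p] (m j) with hmc
  have hfacM : ∀ q, M.factorization q = Finset.univ.sup fun j => (m j).factorization q :=
    fun q => factorization_finset_lcm _ _ (fun j _ => hm0 j) q
  have hmc0 : ∀ j, mc j ≠ 0 := fun j => (Nat.ordCompl_pos p (hm0 j)).ne'
  apply Nat.eq_of_factorization_eq
    (finset_lcm_ne_zero _ _ (fun j _ => hmc0 j)) (Nat.ordCompl_pos p hM0).ne'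
  intro q
  rw [factorization_finset_lcm _ _ (fun j _ => hmc0 j) q,
    Nat.factorization_ordCompl M p]
  by_cases hq : q = p
  · subst hq
    rw [Finsupp.erase_same]
    apply le_antisymm _ (Nat.zero_le _)
    apply Finset.sup_le
    intro j _
    rw [hmc]
    simp [Nat.factorization_ordCompl, Finsupp.erase_same]
  · rw [Finsupp.erase_ne hq, hfacM q]
    apply Finset.sup_congr rfl
    intro j _
    rw [hmc]
    simp [Nat.factorization_ordCompl, Finsupp.erase_ne hq]

lemma orbE_split (m : Fin r → ℕ) (hm : ∀ j, 0 < m j) {p : ℕ} (hp : p.Prime)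
    (hpM : p ∣ Finset.univ.lcm m) :
    orbE m = orbE (fun j => p ^ (m j).factorization p) *
      orbE (fun j => ordCompl[p] (m j)) := by
  classical
  set M := Finset.univ.lcm m with hMdef
  have hm0 : ∀ j, m j ≠ 0 := fun j => (hm j).ne'
  have hM0 : M ≠ 0 := finset_lcm_ne_zero _ _ (fun j _ => hm0 j)
  set e := M.factorization p with he
  set mp : Fin r → ℕ := fun j => p ^ (m j).factorization p with hmp
  set mc : Fin r → ℕ := fun j => ordCompl[p] (m j) with hmc
  have hfacM : ∀ q, M.factorization q = Finset.univ.sup fun j => (m j).factorization q :=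
    fun q => factorization_finset_lcm _ _ (fun j _ => hm0 j) q
  have haj : ∀ j, (m j).factorization p ≤ e := by
    intro j; rw [he, hfacM p]
    exact Finset.le_sup (f := fun j => (m j).factorization p) (Finset.mem_univ j)
  -- lcm of the p-parts
  have hlcm_mp : Finset.univ.lcm mp = p ^ e := by
    have h1 : Finset.univ.lcm mp ∣ p ^ e := by
      apply Finset.lcm_dvd
      intro j _
      exact pow_dvd_pow p (haj j)
    have hne : Finset.univ.lcm mp ≠ 0 :=
      finset_lcm_ne_zero _ _ (fun j _ => pow_ne_zero _ hp.pos.ne')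
    have hsup : (Finset.univ.sup fun j => (mp j).factorization p)
        = Finset.univ.sup fun j => (m j).factorization p :=
      Finset.sup_congr rfl (fun j _ => by simp [hmp, hp.factorization_pow])
    have h2 : p ^ e ∣ Finset.univ.lcm mp := by
      rw [hp.pow_dvd_iff_le_factorization hne,
        factorization_finset_lcm _ _ (fun j _ => pow_ne_zero _ hp.pos.ne') p, hsup,
        he, hfacM p]
    exact Nat.dvd_antisymm h1 h2
  -- lcm of the complements
  have hmc0 : ∀ j, mc j ≠ 0 := fun j => (Nat.ordCompl_pos p (hm0 j)).ne'
  have hlcm_mc : Finset.univ.lcm mc = ordCompl[p] M := lcm_ordCompl m hm0 hp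
  have hcop : Nat.Coprime (p ^ e) (ordCompl[p] M) :=
    Nat.Coprime.pow_left _ (Nat.coprime_ordCompl hp hM0)
  have hMeq : p ^ e * ordCompl[p] M = M := Nat.ordProj_mul_ordCompl_eq_self M p
  have hpe_pos : 0 < p ^ e := pow_pos hp.pos e
  have hMc_pos : 0 < ordCompl[p] M := Nat.ordCompl_pos p hM0
  set F : ℕ → ℚ := fun k => ∏ j, vonSterneck k (mp j) with hF
  set G : ℕ → ℚ := fun k => ∏ j, vonSterneck k (mc j) with hG
  have hFper : ∀ k, F k = F (k % p ^ e) := by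
    intro k
    refine Finset.prod_congr rfl fun j _ => ?_
    exact (vonSterneck_mod (hlcm_mp ▸ Finset.dvd_lcm (Finset.mem_univ j)) k).symm
  have hGper : ∀ k, G k = G (k % ordCompl[p] M) := by
    intro k
    refine Finset.prod_congr rfl fun j _ => ?_
    exact (vonSterneck_mod (hlcm_mc ▸ Finset.dvd_lcm (Finset.mem_univ j)) k).symm
  have hsplit : ∀ k, (∏ j, vonSterneck k (m j)) = F k * G k := by
    intro k
    rw [hF, hG, ← Finset.prod_mul_distrib]
    refine Finset.prod_congr rfl fun j _ => ?_
    rw [hmp, hmc]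
    have : m j = p ^ (m j).factorization p * ordCompl[p] (m j) :=
      (Nat.ordProj_mul_ordCompl_eq_self (m j) p).symm
    conv_lhs => rw [this]
    exact vonSterneck_mul (pow_pos hp.pos _) (Nat.ordCompl_pos p (hm0 j))
      (Nat.Coprime.pow_left _ (Nat.coprime_ordCompl hp (hm0 j))) k
  have hperM : ∀ k, (∏ j, vonSterneck k (m j)) = ∏ j, vonSterneck (k % M) (m j) := by
    intro k
    refine Finset.prod_congr rfl fun j _ => ?_
    exact (vonSterneck_mod (Finset.dvd_lcm (Finset.mem_univ j)) k).symm
  have key : ∑ k ∈ Finset.Icc 1 M, ∏ j, vonSterneck k (m j)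
      = (∑ k ∈ Finset.Icc 1 (p ^ e), F k) * (∑ k ∈ Finset.Icc 1 (ordCompl[p] M), G k) := by
    rw [sum_Icc_eq_sum_range_of_periodic (Nat.pos_of_ne_zero hM0) _ hperM,
      sum_Icc_eq_sum_range_of_periodic hpe_pos F hFper,
      sum_Icc_eq_sum_range_of_periodic hMc_pos G hGper,
      ← crt_sum hpe_pos hMc_pos hcop F G hFper hGper]
    have : (∑ k ∈ Finset.range M, ∏ j, vonSterneck k (m j))
        = ∑ k ∈ Finset.range M, F k * G k :=
      Finset.sum_congr rfl fun k _ => hsplit k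
    rw [this]
    exact congrArg (fun n => ∑ k ∈ Finset.range n, F k * G k) hMeq.symm
  simp only [orbE]
  rw [← hMdef, hlcm_mp, hlcm_mc, key]
  have c1 : ((p ^ e : ℕ) : ℚ) ≠ 0 := by exact_mod_cast hpe_pos.ne'
  have c2 : ((ordCompl[p] M : ℕ) : ℚ) ≠ 0 := by exact_mod_cast hMc_pos.ne'
  have c3 : (M : ℚ) = ((p ^ e : ℕ) : ℚ) * ((ordCompl[p] M : ℕ) : ℚ) := by
    rw [← Nat.cast_mul, hMeq]
  rw [c3]
  field_simp
  rfl

end split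

lemma orbE_eq_prod {r : ℕ} (M : ℕ) : ∀ (m : Fin r → ℕ), (∀ j, 0 < m j) →
    Finset.univ.lcm m = M →
    orbE m = ∏ p ∈ M.primeFactors, orbE (fun j => p ^ (m j).factorization p) := by
  induction M using Nat.strong_induction_on with
  | _ M ih =>
    intro m hm hlcm
    have hm0 : ∀ j, m j ≠ 0 := fun j => (hm j).ne'
    have hM0 : M ≠ 0 := hlcm ▸ finset_lcm_ne_zero _ _ (fun j _ => hm0 j)
    by_cases hM1 : M = 1
    · subst hM1
      have hm1 : ∀ j, m j = 1 := fun j =>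
        Nat.dvd_one.mp (hlcm ▸ Finset.dvd_lcm (Finset.mem_univ j))
      rw [orbE, hlcm]
      simp [hm1, vonSterneck_one]
    · obtain ⟨p, hp, hdvd⟩ := Nat.exists_prime_and_dvd hM1
      have hpmem : p ∈ M.primeFactors := Nat.mem_primeFactors.mpr ⟨hp, hdvd, hM0⟩
      set mc : Fin r → ℕ := fun j => ordCompl[p] (m j) with hmc
      have hmc_pos : ∀ j, 0 < mc j := fun j => Nat.ordCompl_pos p (hm0 j)
      have hlcm_mc : Finset.univ.lcm mc = ordCompl[p] M := by
        rw [lcm_ordCompl m hm0 hp, hlcm]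
      have he_pos : 0 < M.factorization p :=
        Nat.Prime.factorization_pos_of_dvd hp hM0 hdvd
      have hlt : ordCompl[p] M < M :=
        Nat.div_lt_self (Nat.pos_of_ne_zero hM0) (Nat.one_lt_pow he_pos.ne' hp.one_lt)
      have hih := ih (ordCompl[p] M) hlt mc hmc_pos hlcm_mc
      have hPF : (ordCompl[p] M).primeFactors = M.primeFactors.erase p := by
        rw [← Nat.support_factorization, Nat.factorization_ordCompl,
          Finsupp.support_erase, Nat.support_factorization]
      have hterm : ∀ q ∈ M.primeFactors.erase p,
          orbE (fun j => q ^ (mc j).factorization q)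
            = orbE (fun j => q ^ (m j).factorization q) := by
        intro q hq
        have hqp : q ≠ p := (Finset.mem_erase.mp hq).1
        congr 1
        funext j
        rw [hmc]
        simp only
        rw [Nat.factorization_ordCompl, Finsupp.erase_ne hqp]
      have hsplit := orbE_split m hm hp (hlcm ▸ hdvd)
      rw [hsplit, ← hmc, hih, hPF, Finset.prod_congr rfl hterm]
      exact Finset.mul_prod_erase _ (fun q => orbE fun j => q ^ (m j).factorization q) hpmem

theorem orbE_multiplicative {r : ℕ} (m : Fin r → ℕ) (hm : ∀ j, 0 < m j) :
    (Finset.univ.lcm m = 1 → orbE m = 1) ∧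
    (1 < Finset.univ.lcm m →
      orbE m = ∏ p ∈ (Finset.univ.lcm m).primeFactors,
        orbE (fun j => p ^ (m j).factorization p)) := by
  constructor
  · intro h1
    have := orbE_eq_prod 1 m hm h1
    simpa using this
  · intro _
    exact orbE_eq_prod _ m hm rfl
end

section
/- For every tuple of positive integers (m_1,…,m_r), the rational number E(m_1,…,m_r) is a non-negative integer; that is, there exists a natural number N with E(m_1,…,m_r) = N. -/
open Finset

/-- coprime residues -/
def CR (e : ℕ) : Finset ℕ := (range e).filter (fun a => Nat.gcd a e = 1)

lemma nat_div_mul_div {e d n : ℕ} (hde : 0 < e) (he : e ∣ d) (hd : d ∣ n) :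
    n / d * (d / e) = n / e := by
  rcases he with ⟨c, rfl⟩
  rcases hd with ⟨b, rfl⟩
  rcases Nat.eq_zero_or_pos c with rfl | hc
  · simp
  have hec : 0 < e * c := Nat.mul_pos hde hc
  rw [Nat.mul_div_cancel_left _ hec, Nat.mul_div_cancel_left _ hde,
    mul_assoc, Nat.mul_div_cancel_left _ hde, mul_comm]

lemma pow_congr_mod {M : Type*} [Monoid M] {ξ : M} {L : ℕ} (h1 : ξ ^ L = 1)
    {a b : ℕ} (h : a ≡ b [MOD L]) : ξ ^ a = ξ ^ b := by
  conv_lhs => rw [← Nat.mod_add_div a L, pow_add, pow_mul, h1, one_pow, mul_one]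
  conv_rhs => rw [← Nat.mod_add_div b L, pow_add, pow_mul, h1, one_pow, mul_one]
  rw [h]

/-- Partition of `range d` according to `d / gcd a d`. -/
lemma sum_range_eq_sum_divisors_CR {d : ℕ} (hd : 0 < d) (z : ℂ) :
    ∑ a ∈ range d, z ^ a
      = ∑ e ∈ d.divisors, ∑ c ∈ CR e, z ^ (d / e * c) := by
  rw [← Finset.sum_fiberwise_of_maps_to (g := fun a => d / Nat.gcd a d)
      (t := d.divisors) (fun a _ => Nat.mem_divisors.2
        ⟨Nat.div_dvd_of_dvd (Nat.gcd_dvd_right a d), hd.ne'⟩)]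
  refine Finset.sum_congr rfl fun e he => ?_
  obtain ⟨hed, hd0⟩ := Nat.mem_divisors.1 he
  have he0 : 0 < e := Nat.pos_of_dvd_of_pos hed hd
  have hde0 : 0 < d / e := Nat.div_pos (Nat.le_of_dvd hd hed) he0
  refine (Finset.sum_bij (fun (c : ℕ) _ => d / e * c) ?_ ?_ ?_ ?_).symm
  · intro c hc
    obtain ⟨hclt, hccop⟩ := Finset.mem_filter.1 hc
    have hclt' := Finset.mem_range.1 hclt
    have hlt : d / e * c < d := by
      have := mul_lt_mul_of_pos_left hclt' hde0
      rwa [Nat.div_mul_cancel hed] at this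
    refine Finset.mem_filter.2 ⟨Finset.mem_range.2 hlt, ?_⟩
    have hg : Nat.gcd (d / e * c) d = d / e := by
      nth_rewrite 2 [show d = d / e * e from (Nat.div_mul_cancel hed).symm]
      rw [Nat.gcd_mul_left, hccop, mul_one]
    rw [hg, Nat.div_div_self hed hd0]
  · intro c _ c' _ h
    exact Nat.eq_of_mul_eq_mul_left hde0 h
  · intro a ha
    obtain ⟨ha1, ha2⟩ := Finset.mem_filter.1 ha
    have halt := Finset.mem_range.1 ha1
    have hgd : Nat.gcd a d ∣ d := Nat.gcd_dvd_right a d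
    have hgcd : Nat.gcd a d = d / e := by
      have h1 : d / Nat.gcd a d * Nat.gcd a d = d := Nat.div_mul_cancel hgd
      rw [ha2] at h1
      exact (Nat.div_eq_of_eq_mul_left he0 (by rw [mul_comm] at h1; exact h1.symm)).symm
    have hga : Nat.gcd a d ∣ a := Nat.gcd_dvd_left a d
    set c := a / (d / e) with hc
    have hde_dvd_a : d / e ∣ a := hgcd ▸ hga
    have hac : a = d / e * c := (Nat.mul_div_cancel' hde_dvd_a).symm
    refine ⟨c, ?_, hac.symm⟩
    have hclt : c < e := by
      by_contra hce
      push_neg at hce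
      have : d / e * e ≤ d / e * c := Nat.mul_le_mul_left _ hce
      rw [Nat.div_mul_cancel hed] at this
      omega
    have hcop : Nat.gcd c e = 1 := by
      have h2 : Nat.gcd (d / e * c) (d / e * e) = d / e := by
        rw [Nat.div_mul_cancel hed, ← hac, hgcd]
      rw [Nat.gcd_mul_left] at h2
      nth_rewrite 2 [show d / e = d / e * 1 from (Nat.mul_one _).symm] at h2
      exact Nat.eq_of_mul_eq_mul_left hde0 h2
    exact Finset.mem_filter.2 ⟨Finset.mem_range.2 hclt, hcop⟩
  · intro c _
    rfl

open ArithmeticFunction in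
lemma sum_CR_primitive {n : ℕ} (hn : 0 < n) {ξ : ℂ} (hξ : IsPrimitiveRoot ξ n) :
    ∑ c ∈ CR n, ξ ^ c = (moebius n : ℂ) := by
  have key : ∀ d > 0, d ∈ {d : ℕ | d ∣ n} →
      ∑ e ∈ d.divisors, (∑ c ∈ CR e, ξ ^ (n / e * c)) =
        (fun d : ℕ => if d = 1 then (1 : ℂ) else 0) d := by
    intro d hd hdn
    have hdn : d ∣ n := hdn
    have hprim : IsPrimitiveRoot (ξ ^ (n / d)) d :=
      hξ.pow hn (Nat.div_mul_cancel hdn).symm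
    have step : ∑ e ∈ d.divisors, (∑ c ∈ CR e, ξ ^ (n / e * c)) =
        ∑ a ∈ range d, (ξ ^ (n / d)) ^ a := by
      rw [sum_range_eq_sum_divisors_CR hd]
      refine Finset.sum_congr rfl fun e he => Finset.sum_congr rfl fun c _ => ?_
      obtain ⟨hed, hd0⟩ := Nat.mem_divisors.1 he
      have he0 : 0 < e := Nat.pos_of_dvd_of_pos hed hd
      rw [← pow_mul, ← mul_assoc, nat_div_mul_div he0 hed hdn]
    rw [step]
    rcases eq_or_ne d 1 with rfl | hd1
    · simp
    · simp only [if_neg hd1]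
      exact hprim.geom_sum_eq_zero (lt_of_le_of_ne hd (Ne.symm hd1))
  have inv := (ArithmeticFunction.sum_eq_iff_sum_smul_moebius_eq_on
      {d : ℕ | d ∣ n} (fun a b hab hb => hab.trans hb)).mp key n hn (dvd_refl n)
  have hg : ∑ c ∈ CR n, ξ ^ (n / n * c) = ∑ c ∈ CR n, ξ ^ c := by
    refine Finset.sum_congr rfl fun c _ => ?_
    rw [Nat.div_self hn, one_mul]
  rw [hg] at inv
  rw [← inv]
  rw [Finset.sum_eq_single_of_mem (n, 1)
      (Nat.mem_divisorsAntidiagonal.2 ⟨by simp, hn.ne'⟩)]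
  · simp
  · rintro ⟨x, y⟩ hxy hne
    obtain ⟨hprod, _⟩ := Nat.mem_divisorsAntidiagonal.1 hxy
    have hy : y ≠ 1 := by
      rintro rfl
      rw [mul_one] at hprod
      exact hne (Prod.ext hprod rfl)
    simp [hy]

lemma sum_units_eq_sum_CR {e : ℕ} [NeZero e] (f : ℕ → ℂ) :
    ∑ u : (ZMod e)ˣ, f ((u : ZMod e).val) = ∑ c ∈ CR e, f c := by
  refine Finset.sum_bij (fun (u : (ZMod e)ˣ) _ => (u : ZMod e).val) ?_ ?_ ?_ ?_
  · intro u _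
    exact Finset.mem_filter.2 ⟨Finset.mem_range.2 (ZMod.val_lt _),
      ZMod.val_coe_unit_coprime u⟩
  · intro u _ u' _ h
    exact Units.ext (ZMod.val_injective e h)
  · intro c hc
    obtain ⟨hclt, hccop⟩ := Finset.mem_filter.1 hc
    refine ⟨ZMod.unitOfCoprime c hccop, Finset.mem_univ _, ?_⟩
    show ((ZMod.unitOfCoprime c hccop : (ZMod e)ˣ) : ZMod e).val = c
    rw [ZMod.coe_unitOfCoprime, ZMod.val_natCast,
      Nat.mod_eq_of_lt (Finset.mem_range.1 hclt)]
  · intro u _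
    rfl

open ArithmeticFunction in
lemma holder {L n k : ℕ} [NeZero n] (hnL : n ∣ L) (hL : 0 < L) {ξ : ℂ}
    (hξ : IsPrimitiveRoot ξ L) :
    ∑ u : (ZMod n)ˣ, ξ ^ (L / n * (u : ZMod n).val * k) = ((vonSterneck k n : ℚ) : ℂ) := by
  have hn : 0 < n := Nat.pos_of_ne_zero (NeZero.ne n)
  set g := Nat.gcd k n with hgdef
  have hg0 : 0 < g := Nat.gcd_pos_of_pos_right k hn
  set n' := n / g with hn'def
  have hg_dvd_n : g ∣ n := Nat.gcd_dvd_right k n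
  have hn'_dvd : n' ∣ n := Nat.div_dvd_of_dvd hg_dvd_n
  have hn'0 : 0 < n' := Nat.div_pos (Nat.le_of_dvd hn hg_dvd_n) hg0
  haveI : NeZero n' := ⟨hn'0.ne'⟩
  have hn'L : n' ∣ L := hn'_dvd.trans hnL
  have hgk : g ∣ k := Nat.gcd_dvd_left k n
  set k' := k / g with hk'def
  have hkk : g * k' = k := Nat.mul_div_cancel' hgk
  have hcop : Nat.Coprime k' n' := Nat.coprime_div_gcd_div_gcd hg0
  have hxiL : ξ ^ L = 1 := hξ.pow_eq_one
  have hnn' : n / n' = g := Nat.div_div_self hg_dvd_n hn.ne'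
  have hLn' : L / n * g = L / n' := by
    rw [← hnn']; exact nat_div_mul_div hn'0 hn'_dvd hnL
  set π := ZMod.unitsMap hn'_dvd with hπ
  -- fiberwise decomposition
  rw [← Finset.sum_fiberwise_of_maps_to (g := fun u => π u)
      (t := (Finset.univ : Finset (ZMod n')ˣ)) (fun u _ => Finset.mem_univ _)]
  -- inner sums are constant on fibers
  have hfiber_val : ∀ (v : (ZMod n')ˣ) (u : (ZMod n)ˣ), π u = v →
      ξ ^ (L / n * (u : ZMod n).val * k) = ξ ^ (L / n * (v : ZMod n').val * k) := by
    intro v u huv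
    refine pow_congr_mod hxiL ?_
    have hvval : ((v : ZMod n') : ZMod n').val = (u : ZMod n).val % n' := by
      rw [← huv]
      have : ((π u : (ZMod n')ˣ) : ZMod n') = ((u : ZMod n).val : ZMod n') := by
        rw [hπ, ZMod.unitsMap_def]
        simp only [Units.coe_map, MonoidHom.coe_coe, ZMod.castHom_apply]
        rw [← ZMod.natCast_val]
      rw [this, ZMod.val_natCast]
    have h1 : (u : ZMod n).val ≡ (v : ZMod n').val [MOD n'] := by
      show (u : ZMod n).val % n' = (v : ZMod n').val % n'
      rw [hvval, Nat.mod_mod_of_dvd _ (dvd_refl n')]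
    have h2 := (h1.mul_left' (L / n)).mul_right' k
    refine h2.of_dvd ?_
    have hLg : L / n * n' = L / g := nat_div_mul_div hg0 hg_dvd_n hnL
    have hgL : g ∣ L := hg_dvd_n.trans hnL
    refine ⟨k', ?_⟩
    calc L / n * n' * k = L / g * (g * k') := by rw [hLg, hkk]
      _ = L / g * g * k' := by ring
      _ = L * k' := by rw [Nat.div_mul_cancel hgL]
  have hconst : ∀ v : (ZMod n')ˣ,
      ∑ u ∈ Finset.univ.filter (fun u => π u = v), ξ ^ (L / n * (u : ZMod n).val * k)
        = (Finset.univ.filter (fun u => π u = v)).card • ξ ^ (L / n * (v : ZMod n').val * k) := by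
    intro v
    rw [Finset.sum_congr rfl (fun u hu => hfiber_val v u (Finset.mem_filter.1 hu).2),
      Finset.sum_const]
  -- all fibers have the same cardinality K
  have hsurj : Function.Surjective π := ZMod.unitsMap_surjective hn'_dvd
  set K := (Finset.univ.filter (fun u => π u = 1)).card with hK
  have hcard : ∀ v : (ZMod n')ˣ, (Finset.univ.filter (fun u => π u = v)).card = K := by
    intro v
    obtain ⟨u₀, hu₀⟩ := hsurj v
    refine Finset.card_bij' (fun u _ => u * u₀⁻¹) (fun w _ => w * u₀) ?_ ?_ ?_ ?_
    · intro u hu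
      simp only [Finset.mem_filter, Finset.mem_univ, true_and] at hu ⊢
      rw [map_mul, hu, map_inv, hu₀, mul_inv_cancel]
    · intro w hw
      simp only [Finset.mem_filter, Finset.mem_univ, true_and] at hw ⊢
      rw [map_mul, hw, hu₀, one_mul]
    · intro u _; simp
    · intro w _; simp
  -- totient relation
  have htot : n.totient = K * n'.totient := by
    have := Finset.card_eq_sum_card_fiberwise
      (f := fun u : (ZMod n)ˣ => π u) (s := Finset.univ) (t := Finset.univ)
      (fun u _ => Finset.mem_univ _)
    rw [Finset.sum_congr rfl (fun v _ => hcard v), Finset.sum_const, smul_eq_mul] at this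
    have hcn : (Finset.univ : Finset (ZMod n)ˣ).card = n.totient := by
      rw [Finset.card_univ, ZMod.card_units_eq_totient]
    have hcn' : (Finset.univ : Finset (ZMod n')ˣ).card = n'.totient := by
      rw [Finset.card_univ, ZMod.card_units_eq_totient]
    rw [hcn, hcn'] at this
    rw [this, mul_comm]
  -- evaluate the sum over v
  have hζ' : IsPrimitiveRoot (ξ ^ (L / n')) n' := hξ.pow hL (Nat.div_mul_cancel hn'L).symm
  have hexp : ∀ v : (ZMod n')ˣ,
      ξ ^ (L / n * (v : ZMod n').val * k) = (ξ ^ (L / n')) ^ (k' * (v : ZMod n').val) := by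
    intro v
    rw [← pow_mul]
    congr 1
    rw [← hkk, ← hLn']
    ring
  have hreindex : ∑ v : (ZMod n')ˣ, (ξ ^ (L / n')) ^ (k' * (v : ZMod n').val)
      = ∑ v : (ZMod n')ˣ, (ξ ^ (L / n')) ^ ((v : ZMod n').val) := by
    set w := ZMod.unitOfCoprime k' hcop with hw
    refine Fintype.sum_equiv (Equiv.mulLeft w) _ _ (fun v => ?_)
    simp only [Equiv.coe_mulLeft]
    refine pow_congr_mod hζ'.pow_eq_one ?_
    have hwv : ((w * v : (ZMod n')ˣ) : ZMod n') = (k' : ZMod n') * (v : ZMod n') := by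
      rw [hw, Units.val_mul, ZMod.coe_unitOfCoprime]
    rw [hwv, ZMod.val_mul, ZMod.val_natCast]
    exact (((Nat.mod_modEq k' n').mul_right _).symm).trans
      (Nat.mod_modEq (k' % n' * (v : ZMod n').val) n').symm
  have hsumv : ∑ v : (ZMod n')ˣ, (ξ ^ (L / n')) ^ ((v : ZMod n').val) = (moebius n' : ℂ) := by
    rw [sum_units_eq_sum_CR (fun c => (ξ ^ (L / n')) ^ c)]
    exact sum_CR_primitive hn'0 hζ'
  -- put everything together
  rw [Finset.sum_congr rfl (fun v _ => hconst v)]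
  rw [Finset.sum_congr rfl (fun v (_ : v ∈ Finset.univ) => by rw [hcard v, hexp v])]
  rw [← Finset.smul_sum, hreindex, hsumv]
  -- compare with vonSterneck
  have hφc : (n'.totient : ℂ) ≠ 0 := Nat.cast_ne_zero.2 (Nat.totient_pos.2 hn'0).ne'
  rw [vonSterneck, ← hgdef, ← hn'def, nsmul_eq_mul]
  push_cast [htot]
  rw [mul_div_assoc, mul_div_cancel_right₀ _ hφc, mul_comm]

theorem orbE_eq_natCast {r : ℕ} (m : Fin r → ℕ) (hm : ∀ j, 0 < m j) :
    ∃ N : ℕ, orbE m = (N : ℚ) := by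
  classical
  haveI inst : ∀ j, NeZero (m j) := fun j => ⟨(hm j).ne'⟩
  set L := Finset.univ.lcm m with hLdef
  have hmL : ∀ j, m j ∣ L := fun j => Finset.dvd_lcm (Finset.mem_univ j)
  have hL : 0 < L := by
    rcases Nat.eq_zero_or_pos L with h0 | h
    · rw [hLdef, Finset.lcm_eq_zero_iff] at h0
      obtain ⟨j, _, hj⟩ := h0
      have := hm j
      omega
    · exact h
  set ξ := Complex.exp (2 * Real.pi * Complex.I / L) with hξdef
  have hξ : IsPrimitiveRoot ξ L := Complex.isPrimitiveRoot_exp L hL.ne'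
  set T : (∀ j, (ZMod (m j))ˣ) → ℕ :=
    fun a => ∑ j, L / m j * ((a j : ZMod (m j)).val) with hTdef
  set N := (Finset.univ.filter (fun a : ∀ j, (ZMod (m j))ˣ => L ∣ T a)).card with hNdef
  refine ⟨N, ?_⟩
  have hc : ∀ k : ℕ, ∏ j, ((vonSterneck k (m j) : ℚ) : ℂ)
      = ∑ a : (∀ j, (ZMod (m j))ˣ), ξ ^ (T a * k) := by
    intro k
    have h1 : ∀ j, ((vonSterneck k (m j) : ℚ) : ℂ)
        = ∑ u : (ZMod (m j))ˣ, ξ ^ (L / m j * (u : ZMod (m j)).val * k) :=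
      fun j => (holder (hmL j) hL hξ).symm
    rw [Finset.prod_congr rfl (fun j _ => h1 j), Finset.prod_univ_sum]
    rw [Fintype.piFinset_univ]
    refine Finset.sum_congr rfl fun a _ => ?_
    rw [Finset.prod_pow_eq_pow_sum]
    congr 1
    rw [hTdef, Finset.sum_mul]
  have hboundary : ∑ a : (∀ j, (ZMod (m j))ˣ), ξ ^ (T a * L)
      = ∑ a : (∀ j, (ZMod (m j))ˣ), ξ ^ (T a * 0) := by
    refine Finset.sum_congr rfl fun a _ => ?_
    rw [mul_comm, pow_mul, hξ.pow_eq_one, mul_zero, pow_zero, one_pow]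
  have hkey : ((∑ k ∈ Finset.Icc 1 L, ∏ j, vonSterneck k (m j) : ℚ) : ℂ)
      = (L : ℂ) * (N : ℂ) := by
    push_cast
    rw [Finset.sum_congr rfl (fun k (_ : k ∈ Finset.Icc 1 L) => hc k)]
    have hswap : ∑ k ∈ Finset.Icc 1 L, ∑ a : (∀ j, (ZMod (m j))ˣ), ξ ^ (T a * k)
        = ∑ k ∈ Finset.range L, ∑ a : (∀ j, (ZMod (m j))ˣ), ξ ^ (T a * k) := by
      rw [← Finset.Ico_add_one_right_eq_Icc, Finset.sum_Ico_succ_top hL,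
        Finset.range_eq_Ico, Finset.sum_eq_sum_Ico_succ_bot hL, hboundary]
      exact add_comm _ _
    rw [hswap, Finset.sum_comm]
    have hinner : ∀ a : (∀ j, (ZMod (m j))ˣ),
        ∑ k ∈ Finset.range L, ξ ^ (T a * k) = if L ∣ T a then (L : ℂ) else 0 := by
      intro a
      have hz : ∀ k, ξ ^ (T a * k) = (ξ ^ (T a)) ^ k := fun k => pow_mul ξ (T a) k
      rw [Finset.sum_congr rfl (fun k _ => hz k)]
      by_cases h : L ∣ T a
      · rw [if_pos h]
        have : ξ ^ (T a) = 1 := (hξ.pow_eq_one_iff_dvd (T a)).2 h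
        simp [this]
      · rw [if_neg h]
        have hne : ξ ^ (T a) ≠ 1 := fun hone => h ((hξ.pow_eq_one_iff_dvd (T a)).1 hone)
        rw [geom_sum_eq hne]
        have : (ξ ^ (T a)) ^ L = 1 := by
          rw [← pow_mul, mul_comm, pow_mul, hξ.pow_eq_one, one_pow]
        rw [this, sub_self, zero_div]
    rw [Finset.sum_congr rfl (fun a _ => hinner a)]
    rw [Finset.sum_ite, Finset.sum_const, Finset.sum_const_zero, add_zero, ← hNdef,
      nsmul_eq_mul, mul_comm]
  have hLQ : ((L : ℕ) : ℚ) ≠ 0 := Nat.cast_ne_zero.2 hL.ne'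
  have hS : (∑ k ∈ Finset.Icc 1 L, ∏ j, vonSterneck k (m j) : ℚ) = (L : ℚ) * N := by
    have := hkey
    have h2 : (((L : ℚ) * N : ℚ) : ℂ) = (L : ℂ) * N := by push_cast; ring
    exact_mod_cast hkey.trans h2.symm
  rw [orbE, ← hLdef, hS, mul_comm, mul_div_assoc, div_self hLQ, mul_one]
end

section
/- For every tuple of positive integers (m_1,…,m_r) with m = lcm(m_1,…,m_r), the integer φ(m) divides the integer E(m_1,…,m_r), where φ is Euler's totient function. -/
open Finset ArithmeticFunction

namespace OrbAux

/-- Ramanujan sum via divisor sums. -/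
def cR (k n : ℕ) : ℤ :=
  ∑ d ∈ n.divisors, (if d ∣ k then (d : ℤ) else 0) * moebius (n / d)

lemma sum_range_pow {z : ℂ} {n : ℕ} (hz : IsPrimitiveRoot z n) (t : ℕ) :
    ∑ k ∈ range n, (z ^ t) ^ k = if n ∣ t then (n : ℂ) else 0 := by
  by_cases h : n ∣ t
  · rw [if_pos h, (hz.pow_eq_one_iff_dvd t).mpr h]
    simp
  · have h1 : z ^ t ≠ 1 := by
      rw [Ne, hz.pow_eq_one_iff_dvd]; exact h
    rw [geom_sum_eq h1, if_neg h, ← pow_mul, mul_comm t n, pow_mul, hz.pow_eq_one, one_pow,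
      sub_self, zero_div]

lemma sum_Icc_pow {z : ℂ} {n : ℕ} (hz : IsPrimitiveRoot z n) (t : ℕ) :
    ∑ k ∈ Icc 1 n, z ^ (k * t) = if n ∣ t then (n : ℂ) else 0 := by
  have h1 : ∑ k ∈ Icc 1 n, z ^ (k * t) = z ^ t * ∑ k ∈ range n, (z ^ t) ^ k := by
    rw [← Finset.Ico_add_one_right_eq_Icc, Finset.sum_Ico_eq_sum_range, Finset.mul_sum]
    simp only [Nat.add_sub_cancel]
    refine Finset.sum_congr rfl fun k _ => ?_
    rw [← pow_mul, ← pow_add, add_mul, one_mul, mul_comm t k]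
  rw [h1, sum_range_pow hz]
  by_cases h : n ∣ t
  · simp [h, (hz.pow_eq_one_iff_dvd t).mpr h]
  · simp [h]

lemma moebius_sum (n : ℕ) :
    (∑ d ∈ n.divisors, moebius d) = if n = 1 then (1 : ℤ) else 0 := by
  rw [show (∑ d ∈ n.divisors, moebius d) = (moebius * (zeta : ArithmeticFunction ℤ)) n from (coe_mul_zeta_apply).symm]
  rw [moebius_mul_coe_zeta, one_apply]

lemma divisors_gcd (j n : ℕ) (hn : 0 < n) :
    (Nat.gcd j n).divisors = n.divisors.filter (· ∣ j) := by
  ext e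
  simp only [Nat.mem_divisors, Finset.mem_filter, Nat.dvd_gcd_iff]
  constructor
  · rintro ⟨⟨h1, h2⟩, -⟩
    exact ⟨⟨h2, hn.ne'⟩, h1⟩
  · rintro ⟨⟨h2, -⟩, h1⟩
    refine ⟨⟨h1, h2⟩, ?_⟩
    intro h0
    rw [Nat.gcd_eq_zero_iff] at h0
    exact hn.ne' h0.2

lemma cR_eq_sum_units {M n : ℕ} [NeZero n] (hM : 0 < M) (hnM : n ∣ M) {z : ℂ}
    (hz : IsPrimitiveRoot z M) (k : ℕ) :
    (cR k n : ℂ) = ∑ x : (ZMod n)ˣ, z ^ (k * (M / n * (x : ZMod n).val)) := by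
  have hn : 0 < n := Nat.pos_of_ne_zero (NeZero.ne n)
  set ξ : ℂ := z ^ (M / n) with hξdef
  have hξ : IsPrimitiveRoot ξ n := hz.pow hM (Nat.div_mul_cancel hnM).symm
  have step1 : ∀ x : (ZMod n)ˣ, z ^ (k * (M / n * (x : ZMod n).val)) = ξ ^ (k * (x : ZMod n).val) := by
    intro x
    rw [hξdef, ← pow_mul]
    ring_nf
  rw [Finset.sum_congr rfl fun x _ => step1 x]
  -- sum over units = sum over coprime residues
  have hbij : ∑ x : (ZMod n)ˣ, ξ ^ (k * (x : ZMod n).val)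
      = ∑ j ∈ (range n).filter (fun j => Nat.Coprime j n), ξ ^ (k * j) := by
    refine Finset.sum_bij' (fun x _ => (x : ZMod n).val)
      (fun a ha => ZMod.unitOfCoprime a (Finset.mem_filter.mp ha).2) ?_ ?_ ?_ ?_ ?_
    · intro x _
      exact Finset.mem_filter.mpr ⟨Finset.mem_range.mpr (ZMod.val_lt _),
        ZMod.val_coe_unit_coprime x⟩
    · intro a _; exact Finset.mem_univ _
    · intro x _
      apply Units.ext
      simp [ZMod.natCast_val, ZMod.cast_id]
    · intro a ha
      have := Finset.mem_range.mp (Finset.mem_filter.mp ha).1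
      simp [ZMod.coe_unitOfCoprime, ZMod.val_cast_of_lt this]
    · intro x _; rfl
  rw [hbij, Finset.sum_filter]
  -- indicator via moebius
  have hind : ∀ j ∈ range n, (if Nat.Coprime j n then ξ ^ (k * j) else 0)
      = ∑ e ∈ n.divisors.filter (· ∣ j), ((moebius e : ℤ) : ℂ) * ξ ^ (k * j) := by
    intro j _
    rw [← divisors_gcd j n hn, ← Finset.sum_mul]
    have : ((∑ e ∈ (Nat.gcd j n).divisors, moebius e : ℤ) : ℂ)
        = ∑ e ∈ (Nat.gcd j n).divisors, ((moebius e : ℤ) : ℂ) := by push_cast; rfl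
    rw [← this, moebius_sum]
    unfold Nat.Coprime
    by_cases h : Nat.gcd j n = 1 <;> simp [h]
  rw [Finset.sum_congr rfl hind]
  -- swap sums
  have hswap : ∑ j ∈ range n, ∑ e ∈ n.divisors.filter (· ∣ j), ((moebius e : ℤ) : ℂ) * ξ ^ (k * j)
      = ∑ e ∈ n.divisors, ((moebius e : ℤ) : ℂ) * ∑ j ∈ (range n).filter (e ∣ ·), ξ ^ (k * j) := by
    simp only [Finset.sum_filter, Finset.mul_sum]
    rw [Finset.sum_comm]
    refine Finset.sum_congr rfl fun e _ => Finset.sum_congr rfl fun j _ => ?_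
    by_cases h : e ∣ j <;> simp [h]
  rw [hswap]
  -- inner sum
  have hinner : ∀ e ∈ n.divisors, ∑ j ∈ (range n).filter (e ∣ ·), ξ ^ (k * j)
      = if (n / e) ∣ k then ((n / e : ℕ) : ℂ) else 0 := by
    intro e he
    obtain ⟨hed, hn0⟩ := Nat.mem_divisors.mp he
    have he0 : 0 < e := Nat.pos_of_mem_divisors he
    have hre : ∑ j ∈ (range n).filter (e ∣ ·), ξ ^ (k * j)
        = ∑ y ∈ range (n / e), ((ξ ^ e) ^ k) ^ y := by
      refine Finset.sum_bij' (fun j _ => j / e) (fun y _ => e * y) ?_ ?_ ?_ ?_ ?_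
      · intro j hj
        obtain ⟨hj1, hj2⟩ := Finset.mem_filter.mp hj
        rw [Finset.mem_range] at hj1 ⊢
        exact Nat.div_lt_div_of_lt_of_dvd hed hj1
      · intro y hy
        rw [Finset.mem_range] at hy
        refine Finset.mem_filter.mpr ⟨Finset.mem_range.mpr ?_, Dvd.intro y rfl⟩
        calc e * y < e * (n / e) := by exact (Nat.mul_lt_mul_left he0).mpr hy
          _ = n := Nat.mul_div_cancel' hed
      · intro j hj
        exact Nat.mul_div_cancel' (Finset.mem_filter.mp hj).2
      · intro y _
        exact Nat.mul_div_cancel_left y he0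
      · intro j hj
        have hej := (Finset.mem_filter.mp hj).2
        have h3 : k * j = e * k * (j / e) := by
          conv_lhs => rw [← Nat.mul_div_cancel' hej]
          ring
        rw [h3, pow_mul, pow_mul]
    rw [hre]
    have hprim : IsPrimitiveRoot (ξ ^ e) (n / e) :=
      hξ.pow hn (Nat.mul_div_cancel' hed).symm
    exact sum_range_pow hprim k
  rw [Finset.sum_congr rfl fun e he => by rw [hinner e he]]
  -- reindex e ↦ n / e
  unfold cR
  push_cast
  rw [← Nat.sum_div_divisors n (fun e => ((moebius e : ℤ) : ℂ) * (if (n / e) ∣ k then ((n / e : ℕ) : ℂ) else 0))]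
  refine (Finset.sum_congr rfl fun d hd => ?_).symm
  obtain ⟨hdd, -⟩ := Nat.mem_divisors.mp hd
  rw [Nat.div_div_self hdd hn.ne']
  by_cases h : d ∣ k <;> simp [h, mul_comm]

end OrbAux

namespace OrbAux

/-- The "if divides" arithmetic function. -/
def aQ (k : ℕ) : ArithmeticFunction ℚ :=
  ⟨fun d => if d ∣ k then (d : ℚ) else 0, by simp⟩

lemma aQ_apply (k d : ℕ) : aQ k d = if d ∣ k then (d : ℚ) else 0 := rfl

lemma aQ_isMultiplicative (k : ℕ) : (aQ k).IsMultiplicative := by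
  constructor
  · simp [aQ_apply]
  · intro p q h
    rw [aQ_apply, aQ_apply, aQ_apply]
    by_cases hp : p ∣ k
    · by_cases hq : q ∣ k
      · rw [if_pos (h.mul_dvd_of_dvd_of_dvd hp hq), if_pos hp, if_pos hq]; push_cast; ring
      · rw [if_neg fun hpq => hq ((dvd_mul_left q p).trans hpq), if_neg hq, mul_zero]
    · rw [if_neg fun hpq => hp ((dvd_mul_right p q).trans hpq), if_neg hp, zero_mul]

/-- The von Sterneck function as an arithmetic function in `n`. -/
noncomputable def vsF (k : ℕ) : ArithmeticFunction ℚ :=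
  ⟨fun n => vonSterneck k n, by simp [vonSterneck]⟩

lemma vsF_apply (k n : ℕ) : vsF k n = vonSterneck k n := rfl

lemma vsF_isMultiplicative (k : ℕ) : (vsF k).IsMultiplicative := by
  constructor
  · simp [vsF_apply, vonSterneck]
  · intro p q h
    rcases Nat.eq_zero_or_pos p with rfl | hp
    · have : q = 1 := (Nat.coprime_zero_left q).mp h
      subst this
      simp [vsF_apply, vonSterneck]
    rcases Nat.eq_zero_or_pos q with rfl | hq
    · have : p = 1 := (Nat.coprime_zero_right p).mp h
      subst this
      simp [vsF_apply, vonSterneck]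
    simp only [vsF_apply, vonSterneck]
    have hg : Nat.gcd k (p * q) = Nat.gcd k p * Nat.gcd k q := h.gcd_mul k
    have hdp : Nat.gcd k p ∣ p := Nat.gcd_dvd_right k p
    have hdq : Nat.gcd k q ∣ q := Nat.gcd_dvd_right k q
    have hdiv : p * q / (Nat.gcd k p * Nat.gcd k q) = (p / Nat.gcd k p) * (q / Nat.gcd k q) :=
      (Nat.div_mul_div_comm hdp hdq).symm
    have hcop : (p / Nat.gcd k p).Coprime (q / Nat.gcd k q) :=
      Nat.Coprime.coprime_dvd_right (Nat.div_dvd_of_dvd hdq)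
        (Nat.Coprime.coprime_dvd_left (Nat.div_dvd_of_dvd hdp) h)
    rw [hg, hdiv, isMultiplicative_moebius.map_mul_of_coprime hcop, Nat.totient_mul h,
      Nat.totient_mul hcop]
    push_cast
    rw [div_mul_div_comm]
    ring

/-- Hölder's relation: the von Sterneck function equals the Ramanujan sum. -/
lemma vonSterneck_eq_cR (k n : ℕ) (hn : 0 < n) : vonSterneck k n = (cR k n : ℚ) := by
  have hmain : vsF k = aQ k * (moebius : ArithmeticFunction ℚ) := by
    rw [ArithmeticFunction.IsMultiplicative.eq_iff_eq_on_prime_powers _ (vsF_isMultiplicative k) _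
      ((aQ_isMultiplicative k).mul (isMultiplicative_moebius.intCast))]
    intro p i hp
    rcases Nat.eq_zero_or_pos i with rfl | hi
    · rw [pow_zero, (vsF_isMultiplicative k).map_one,
        ((aQ_isMultiplicative k).mul (isMultiplicative_moebius.intCast)).map_one]
    obtain ⟨s, rfl⟩ : ∃ s, i = s + 1 := ⟨i - 1, (Nat.succ_pred_eq_of_pos hi).symm⟩
    have hp1 : 1 < p := hp.one_lt
    have hp0 : 0 < p := hp.pos
    -- RHS evaluation
    have hRHS : (aQ k * (moebius : ArithmeticFunction ℚ)) (p ^ (s + 1))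
        = aQ k (p ^ (s + 1)) - aQ k (p ^ s) := by
      rw [ArithmeticFunction.mul_apply, Nat.sum_divisorsAntidiagonal (f := fun a b => aQ k a * ((moebius : ArithmeticFunction ℚ) b))]
      rw [Nat.divisors_prime_pow hp, Finset.sum_map]
      simp only [Function.Embedding.coeFn_mk]
      have hterm : ∀ j ∈ range (s + 2), j ∉ ({s, s + 1} : Finset ℕ) →
          aQ k (p ^ j) * ((moebius : ArithmeticFunction ℚ) (p ^ (s + 1) / p ^ j)) = 0 := by
        intro j hj hjn
        simp only [Finset.mem_insert, Finset.mem_singleton] at hjn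
        push_neg at hjn
        have hjs : j ≤ s + 1 := Nat.lt_succ_iff.mp (Finset.mem_range.mp hj)
        rw [Nat.pow_div hjs hp0]
        have h2 : 2 ≤ s + 1 - j := by omega
        rw [ArithmeticFunction.intCoe_apply, moebius_apply_prime_pow hp (by omega)]
        rw [if_neg (by omega)]
        simp
      have hsub : ({s, s + 1} : Finset ℕ) ⊆ range (s + 2) := by
        intro x hx
        simp only [Finset.mem_insert, Finset.mem_singleton] at hx
        rcases hx with rfl | rfl <;> simp [Finset.mem_range] <;> omega
      rw [← Finset.sum_subset hsub hterm]
      rw [Finset.sum_pair (by omega : s ≠ s + 1)]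
      rw [Nat.pow_div (by omega) hp0, Nat.pow_div (le_refl _) hp0, Nat.sub_self, pow_zero]
      rw [show s + 1 - s = 1 by omega, pow_one]
      rw [ArithmeticFunction.intCoe_apply, ArithmeticFunction.intCoe_apply,
        moebius_apply_prime hp, moebius_apply_one]
      push_cast
      ring
    rw [hRHS, vsF_apply]
    -- LHS case analysis
    by_cases h1 : p ^ (s + 1) ∣ k
    · have hg : Nat.gcd k (p ^ (s + 1)) = p ^ (s + 1) := Nat.gcd_eq_right h1
      rw [vonSterneck, hg, Nat.div_self (by positivity), moebius_apply_one]
      rw [aQ_apply, aQ_apply, if_pos h1, if_pos ((pow_dvd_pow p (Nat.le_succ s)).trans h1)]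
      rw [Nat.totient_one, Nat.totient_prime_pow hp (Nat.succ_pos s)]
      push_cast [Nat.cast_sub hp.one_le]
      ring
    · by_cases h2 : p ^ s ∣ k
      · have hg : Nat.gcd k (p ^ (s + 1)) = p ^ s := by
          obtain ⟨c, hc, hce⟩ := (Nat.dvd_prime_pow hp).mp (Nat.gcd_dvd_right k (p ^ (s + 1)))
          have hsc : p ^ s ∣ p ^ c := hce ▸ Nat.dvd_gcd h2 (pow_dvd_pow p (Nat.le_succ s))
          have hs_le : s ≤ c := (Nat.pow_dvd_pow_iff_le_right hp1).mp hsc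
          have hc_ne : c ≠ s + 1 := by
            intro hcs
            exact h1 (hcs ▸ hce ▸ Nat.gcd_dvd_left k (p ^ (s + 1)))
          have : c = s := by omega
          rw [hce, this]
        rw [vonSterneck, hg, Nat.pow_div (Nat.le_succ s) hp0, show s + 1 - s = 1 by omega, pow_one]
        rw [moebius_apply_prime hp, Nat.totient_prime_pow hp (Nat.succ_pos s),
          Nat.totient_prime hp]
        rw [aQ_apply, aQ_apply, if_neg h1, if_pos h2]
        have hpn1 : ((p : ℚ) - 1) ≠ 0 := by
          have : (1 : ℚ) < (p : ℚ) := by exact_mod_cast hp1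
          linarith
        push_cast [Nat.cast_sub hp.one_le]
        field_simp
        ring
      · obtain ⟨c, hc, hce⟩ := (Nat.dvd_prime_pow hp).mp (Nat.gcd_dvd_right k (p ^ (s + 1)))
        have hcs : c < s := by
          by_contra hcs
          push_neg at hcs
          exact h2 ((pow_dvd_pow p hcs).trans (hce ▸ Nat.gcd_dvd_left k (p ^ (s + 1))))
        rw [vonSterneck, hce, Nat.pow_div (by omega) hp0]
        rw [moebius_apply_prime_pow hp (by omega), if_neg (by omega)]
        rw [aQ_apply, aQ_apply, if_neg h1, if_neg h2]
        push_cast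
        ring
  have := congrArg (fun f : ArithmeticFunction ℚ => f n) hmain
  simp only [vsF_apply] at this
  rw [this]
  rw [ArithmeticFunction.mul_apply, Nat.sum_divisorsAntidiagonal (f := fun a b => aQ k a * ((moebius : ArithmeticFunction ℚ) b))]
  unfold cR
  push_cast
  refine Finset.sum_congr rfl fun d hd => ?_
  rw [aQ_apply, ArithmeticFunction.intCoe_apply]

end OrbAux

namespace OrbAux

lemma key_cast {n M : ℕ} (h : n ∣ M) {a b : ℕ} (hab : (a : ZMod n) = (b : ZMod n)) :
    ((M / n * a : ℕ) : ZMod M) = ((M / n * b : ℕ) : ZMod M) := by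
  rw [ZMod.natCast_eq_natCast_iff] at hab ⊢
  have := Nat.ModEq.mul_left' (c := M / n) hab
  rwa [Nat.div_mul_cancel h] at this

/-- The exponent functional. -/
def tval {r : ℕ} (m : Fin r → ℕ) (M : ℕ) (x : ∀ j, (ZMod (m j))ˣ) : ℕ :=
  ∑ j, M / m j * ((x j : ZMod (m j)).val)

lemma tval_smul {r : ℕ} (m : Fin r → ℕ) (M : ℕ) (hm : ∀ j, 0 < m j) (hd : ∀ j, m j ∣ M)
    [NeZero M] (u : (ZMod M)ˣ) (x : ∀ j, (ZMod (m j))ˣ) :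
    ((tval m M (fun j => ZMod.unitsMap (hd j) u * x j) : ℕ) : ZMod M)
      = (u : ZMod M) * ((tval m M x : ℕ) : ZMod M) := by
  haveI : ∀ j, NeZero (m j) := fun j => ⟨(hm j).ne'⟩
  unfold tval
  rw [Nat.cast_sum, Nat.cast_sum, Finset.mul_sum]
  refine Finset.sum_congr rfl fun j _ => ?_
  have h1 : ((((ZMod.unitsMap (hd j) u * x j : (ZMod (m j))ˣ) : ZMod (m j))).val : ZMod (m j))
      = ((((u : ZMod M)).val * (((x j : ZMod (m j)))).val : ℕ) : ZMod (m j)) := by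
    rw [ZMod.natCast_val, ZMod.cast_id, Units.val_mul, Nat.cast_mul, ZMod.natCast_val,
      ZMod.natCast_val, ZMod.cast_id, ZMod.unitsMap_def]
    congr 1
  have h2 := key_cast (hd j) h1
  rw [h2]
  push_cast
  rw [ZMod.natCast_val, ZMod.cast_id]
  ring

lemma unit_eq_one {r : ℕ} (m : Fin r → ℕ) {M : ℕ} (hm : ∀ j, 0 < m j)
    (hlcm : Finset.univ.lcm m = M) (hM1 : 1 < M) (hd : ∀ j, m j ∣ M)
    [NeZero M] (u : (ZMod M)ˣ) (hu : ∀ j, ZMod.unitsMap (hd j) u = 1) : u = 1 := by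
  haveI : ∀ j, NeZero (m j) := fun j => ⟨(hm j).ne'⟩
  set v : ℕ := ((u : ZMod M)).val with hv
  have hvj : ∀ j, v ≡ 1 [MOD m j] := by
    intro j
    have := congrArg (fun w : (ZMod (m j))ˣ => (w : ZMod (m j))) (hu j)
    simp only [Units.val_one] at this
    rw [ZMod.unitsMap_def, Units.coe_map] at this
    simp only [MonoidHom.coe_coe, ZMod.castHom_apply] at this
    have h2 : ((v : ℕ) : ZMod (m j)) = ((1 : ℕ) : ZMod (m j)) := by
      rw [hv, ZMod.natCast_val, Nat.cast_one, this]
    exact (ZMod.natCast_eq_natCast_iff _ _ _).mp h2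
  rcases Nat.eq_zero_or_pos v with hv0 | hv1
  · exfalso
    have : ∀ j, m j ∣ 1 := by
      intro j
      have := (hvj j).symm
      rw [hv0] at this
      exact (Nat.modEq_zero_iff_dvd).mp this
    have hM' : M ∣ 1 := hlcm ▸ Finset.lcm_dvd fun j _ => this j
    have := Nat.dvd_one.mp hM'
    omega
  · have hdvd1 : ∀ j, m j ∣ v - 1 := fun j =>
      (Nat.modEq_iff_dvd' hv1).mp (hvj j).symm
    have hMdvd : M ∣ v - 1 := hlcm ▸ Finset.lcm_dvd fun j _ => hdvd1 j
    have : v ≡ 1 [MOD M] := ((Nat.modEq_iff_dvd' hv1).mpr hMdvd).symm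
    have h3 : ((v : ℕ) : ZMod M) = ((1 : ℕ) : ZMod M) := (ZMod.natCast_eq_natCast_iff _ _ _).mpr this
    apply Units.ext
    rw [← ZMod.cast_id _ (u : ZMod M), ← ZMod.natCast_val, h3, Nat.cast_one, Units.val_one]

lemma card_dvd_of_free {G X : Type*} [Group G] [Finite G] [Finite X] [MulAction G X]
    (h : ∀ (g : G) (x : X), g • x = x → g = 1) : Nat.card G ∣ Nat.card X := by
  classical
  haveI : Fintype X := Fintype.ofFinite X
  haveI : Fintype G := Fintype.ofFinite G
  haveI : Fintype (MulAction.orbitRel.Quotient G X) := Fintype.ofFinite _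
  haveI : ∀ w : MulAction.orbitRel.Quotient G X,
      Fintype (MulAction.orbit G (Quotient.out w)) := fun _ => Fintype.ofFinite _
  rw [Nat.card_congr (MulAction.selfEquivSigmaOrbits G X), Nat.card_eq_fintype_card,
    Nat.card_eq_fintype_card, Fintype.card_sigma]
  refine Finset.dvd_sum fun w _ => ?_
  rw [← Nat.card_eq_fintype_card, ← Nat.card_eq_fintype_card,
    Nat.card_congr (MulAction.orbitEquivQuotientStabilizer G (Quotient.out w))]
  have hstab : MulAction.stabilizer G (Quotient.out w) = ⊥ := by
    ext g
    simp only [MulAction.mem_stabilizer_iff, Subgroup.mem_bot]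
    exact ⟨fun hg => h g _ hg, fun hg => hg ▸ one_smul G _⟩
  rw [hstab, Nat.card_congr QuotientGroup.quotientBot.toEquiv]

end OrbAux

theorem totient_lcm_dvd_orbE {r : ℕ} (m : Fin r → ℕ) (hm : ∀ j, 0 < m j) :
    ((Nat.totient (Finset.univ.lcm m) : ℤ)) ∣ (orbE m).num := by
  classical
  set M := Finset.univ.lcm m with hMdef
  have hd : ∀ j, m j ∣ M := fun j => Finset.dvd_lcm (Finset.mem_univ j)
  have hM0 : 0 < M := by
    rcases Nat.eq_zero_or_pos M with h0 | h
    · exfalso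
      obtain ⟨j, -, hj⟩ := Finset.lcm_eq_zero_iff.mp (hMdef ▸ h0)
      exact (hm j).ne' hj
    · exact h
  haveI : NeZero M := ⟨hM0.ne'⟩
  haveI : ∀ j, NeZero (m j) := fun j => ⟨(hm j).ne'⟩
  set N : ℤ := ∑ k ∈ Finset.Icc 1 M, ∏ j, OrbAux.cR k (m j) with hN
  have horb : orbE m = (N : ℚ) / (M : ℚ) := by
    unfold orbE
    rw [← hMdef]
    congr 1
    rw [hN]
    push_cast
    refine Finset.sum_congr rfl fun k _ => Finset.prod_congr rfl fun j _ => ?_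
    exact OrbAux.vonSterneck_eq_cR k (m j) (hm j)
  set P : (∀ j, (ZMod (m j))ˣ) → Prop :=
    fun x => ((OrbAux.tval m M x : ℕ) : ZMod M) = 0 with hP
  have hNcard : N = (M : ℤ) * (Fintype.card {x : ∀ j, (ZMod (m j))ˣ // P x} : ℤ) := by
    set z : ℂ := Complex.exp (2 * Real.pi * Complex.I / M) with hzdef
    have hz : IsPrimitiveRoot z M := Complex.isPrimitiveRoot_exp M hM0.ne'
    have hC : (N : ℂ) = (M : ℂ) * (Fintype.card {x : ∀ j, (ZMod (m j))ˣ // P x} : ℂ) := by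
      rw [hN]
      push_cast
      calc ∑ k ∈ Finset.Icc 1 M, ∏ j, ((OrbAux.cR k (m j) : ℤ) : ℂ)
          = ∑ k ∈ Finset.Icc 1 M, ∏ j, ∑ x : (ZMod (m j))ˣ,
              z ^ (k * (M / m j * ((x : ZMod (m j)).val))) := by
            exact Finset.sum_congr rfl fun k _ => Finset.prod_congr rfl fun j _ =>
              OrbAux.cR_eq_sum_units hM0 (hd j) hz k
        _ = ∑ k ∈ Finset.Icc 1 M, ∑ x : (∀ j, (ZMod (m j))ˣ),
              ∏ j, z ^ (k * (M / m j * ((x j : ZMod (m j)).val))) := by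
            refine Finset.sum_congr rfl fun k _ => ?_
            rw [Finset.prod_univ_sum]
            rw [Fintype.piFinset_univ]
        _ = ∑ k ∈ Finset.Icc 1 M, ∑ x : (∀ j, (ZMod (m j))ˣ),
              z ^ (k * OrbAux.tval m M x) := by
            refine Finset.sum_congr rfl fun k _ => Finset.sum_congr rfl fun x _ => ?_
            rw [Finset.prod_pow_eq_pow_sum, ← Finset.mul_sum]
            rfl
        _ = ∑ x : (∀ j, (ZMod (m j))ˣ), ∑ k ∈ Finset.Icc 1 M,
              z ^ (k * OrbAux.tval m M x) := Finset.sum_comm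
        _ = ∑ x : (∀ j, (ZMod (m j))ˣ), if P x then (M : ℂ) else 0 := by
            refine Finset.sum_congr rfl fun x _ => ?_
            rw [OrbAux.sum_Icc_pow hz (OrbAux.tval m M x)]
            refine if_congr ?_ rfl rfl
            exact (ZMod.natCast_eq_zero_iff (OrbAux.tval m M x) M).symm
        _ = (M : ℂ) * (Fintype.card {x : ∀ j, (ZMod (m j))ˣ // P x} : ℂ) := by
            rw [Finset.sum_ite, Finset.sum_const, Finset.sum_const_zero, add_zero,
              Fintype.card_subtype]
            rw [nsmul_eq_mul]
            ring
    exact_mod_cast hC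
  have hdvd2 : M.totient ∣ Fintype.card {x : ∀ j, (ZMod (m j))ˣ // P x} := by
    by_cases hM1 : M = 1
    · have h7 : M.totient = 1 := by rw [hM1, Nat.totient_one]
      rw [h7]
      exact one_dvd _
    · have hM1' : 1 < M := by omega
      letI : SMul (ZMod M)ˣ {x : ∀ j, (ZMod (m j))ˣ // P x} :=
        ⟨fun u x => ⟨fun j => ZMod.unitsMap (hd j) u * x.1 j, by
          have htv := OrbAux.tval_smul m M hm hd u x.1
          show ((OrbAux.tval m M _ : ℕ) : ZMod M) = 0
          rw [htv, x.2, mul_zero]⟩⟩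
      letI : MulAction (ZMod M)ˣ {x : ∀ j, (ZMod (m j))ˣ // P x} :=
        { one_smul := fun x => Subtype.ext (funext fun j => by
            show ZMod.unitsMap (hd j) 1 * x.1 j = x.1 j
            rw [map_one, one_mul]),
          mul_smul := fun u v x => Subtype.ext (funext fun j => by
            show ZMod.unitsMap (hd j) (u * v) * x.1 j
              = ZMod.unitsMap (hd j) u * (ZMod.unitsMap (hd j) v * x.1 j)
            rw [map_mul, mul_assoc]) }
      have hfree : ∀ (u : (ZMod M)ˣ) (x : {x : ∀ j, (ZMod (m j))ˣ // P x}),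
          u • x = x → u = 1 := by
        intro u x hux
        have hcomp : ∀ j, ZMod.unitsMap (hd j) u = 1 := by
          intro j
          have h5 : ZMod.unitsMap (hd j) u * x.1 j = x.1 j :=
            congrArg (fun y : {x : ∀ j, (ZMod (m j))ˣ // P x} => y.1 j) hux
          have h6 : ZMod.unitsMap (hd j) u * x.1 j = 1 * x.1 j := by rw [one_mul]; exact h5
          exact mul_right_cancel h6
        exact OrbAux.unit_eq_one m hm hMdef.symm hM1' hd u hcomp
      have hdc := OrbAux.card_dvd_of_free hfree
      rw [Nat.card_eq_fintype_card, Nat.card_eq_fintype_card,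
        ZMod.card_units_eq_totient] at hdc
      exact hdc
  rw [horb, hNcard]
  push_cast
  rw [mul_div_cancel_left₀ _ (show (M : ℚ) ≠ 0 by exact_mod_cast hM0.ne')]
  rw [Rat.num_natCast]
  exact Int.natCast_dvd_natCast.mpr hdvd2
end

section
/- Let (m_1,…,m_r) be a tuple of positive integers with m = lcm(m_1,…,m_r). Then E(m_1,…,m_r) = φ(m) if and only if for every prime p dividing m, the multiset A_p of positive exponents {a_j(p) : a_j(p) ≥ 1} satisfies one of the following: (i) A_p consists of exactly two elements, both equal to a(p); or (ii) p = 3 and A_3 = {1,1,1}; or (iii) p = 2 and A_2 consists of two elements equal to a(2) together with r(2)−2 elements equal to 1, where a(2) ≥ 1, r(2) = |A_2| ≥ 3, and r(2) is even in case a(2) = 1. -/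
/-- The multiset of positive exponents `a_j(p) ≥ 1` of a prime `p` in the arguments `m_j`. -/
def posExps {r : ℕ} (m : Fin r → ℕ) (p : ℕ) : Multiset ℕ :=
  Multiset.filter (fun e => 1 ≤ e) (Multiset.map (fun j => (m j).factorization p) Finset.univ.val)

namespace OrbE
open Finset ArithmeticFunction

open Finset ArithmeticFunction

lemma vs_eq_of_gcd_eq {k l n : ℕ} (h : Nat.gcd k n = Nat.gcd l n) :
    vonSterneck k n = vonSterneck l n := by unfold vonSterneck; rw [h]

lemma vs_of_dvd {k n : ℕ} (hn : n ≠ 0) (h : n ∣ k) :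
    vonSterneck k n = (Nat.totient n : ℚ) := by
  unfold vonSterneck
  rw [Nat.gcd_comm, Nat.gcd_eq_left h, Nat.div_self (Nat.pos_of_ne_zero hn)]
  simp

lemma vs_mod {k n N : ℕ} (h : n ∣ N) : vonSterneck (k % N) n = vonSterneck k n := by
  apply vs_eq_of_gcd_eq
  obtain ⟨t, rfl⟩ := h
  conv_rhs => rw [← Nat.div_add_mod k (n * t), mul_assoc]
  rw [Nat.gcd_mul_left_add_left]

lemma gcd_mul_coprime {u v : ℕ} (k : ℕ) (h : u.Coprime v) :
    Nat.gcd k (u * v) = Nat.gcd k u * Nat.gcd k v := by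
  apply Nat.dvd_antisymm
  · exact gcd_mul_dvd_mul_gcd k u v
  · exact Nat.dvd_gcd
      (Nat.Coprime.mul_dvd_of_dvd_of_dvd
        (Nat.Coprime.coprime_dvd_left (Nat.gcd_dvd_right k u)
          (Nat.Coprime.coprime_dvd_right (Nat.gcd_dvd_right k v) h))
        (Nat.gcd_dvd_left k u) (Nat.gcd_dvd_left k v))
      (mul_dvd_mul (Nat.gcd_dvd_right k u) (Nat.gcd_dvd_right k v))

lemma vs_mul (k : ℕ) {u v : ℕ} (hu : u ≠ 0) (hv : v ≠ 0) (h : u.Coprime v) :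
    vonSterneck k (u * v) = vonSterneck k u * vonSterneck k v := by
  unfold vonSterneck
  have hgu := Nat.gcd_dvd_right k u
  have hgv := Nat.gcd_dvd_right k v
  rw [gcd_mul_coprime k h]
  rw [← Nat.div_mul_div_comm hgu hgv]
  have hcop' : (u / Nat.gcd k u).Coprime (v / Nat.gcd k v) :=
    Nat.Coprime.coprime_dvd_left (Nat.div_dvd_of_dvd hgu)
      (Nat.Coprime.coprime_dvd_right (Nat.div_dvd_of_dvd hgv) h)
  rw [isMultiplicative_moebius.map_mul_of_coprime hcop', Nat.totient_mul h,
    Nat.totient_mul hcop']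
  have h1 : (Nat.totient (u / Nat.gcd k u) : ℚ) ≠ 0 := by
    exact_mod_cast (Nat.totient_pos.mpr (Nat.div_pos (Nat.le_of_dvd (Nat.pos_of_ne_zero hu) hgu) (Nat.pos_of_ne_zero (Nat.gcd_ne_zero_right hu)))).ne'
  have h2 : (Nat.totient (v / Nat.gcd k v) : ℚ) ≠ 0 := by
    exact_mod_cast (Nat.totient_pos.mpr (Nat.div_pos (Nat.le_of_dvd (Nat.pos_of_ne_zero hv) hgv) (Nat.pos_of_ne_zero (Nat.gcd_ne_zero_right hv)))).ne'
  push_cast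
  field_simp


open Finset

lemma sum_zmod_eq_sum_range (n : ℕ) [NeZero n] (f : ℕ → ℚ) :
    ∑ x : ZMod n, f x.val = ∑ k ∈ Finset.range n, f k := by
  apply Finset.sum_bij (fun (x : ZMod n) _ => x.val)
  · intro x _; exact Finset.mem_range.mpr (ZMod.val_lt x)
  · intro a _ b _ hab; exact ZMod.val_injective n hab
  · intro b hb
    exact ⟨(b : ZMod n), Finset.mem_univ _, (ZMod.val_natCast_of_lt (Finset.mem_range.mp hb))⟩
  · intros; rfl

lemma sum_mul_split {u v : ℕ} (hu : u ≠ 0) (hv : v ≠ 0) (h : u.Coprime v) (f g : ℕ → ℚ)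
    (hf : ∀ k, f (k % u) = f k) (hg : ∀ k, g (k % v) = g k) :
    ∑ k ∈ range (u * v), f k * g k = (∑ k ∈ range u, f k) * (∑ k ∈ range v, g k) := by
  have : NeZero u := ⟨hu⟩
  have : NeZero v := ⟨hv⟩
  have : NeZero (u * v) := ⟨mul_ne_zero hu hv⟩
  rw [← sum_zmod_eq_sum_range, ← sum_zmod_eq_sum_range, ← sum_zmod_eq_sum_range]
  have key : ∀ x : ZMod (u * v),
      f x.val * g x.val =
        f ((ZMod.chineseRemainder h) x).1.val * g ((ZMod.chineseRemainder h) x).2.val := by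
    intro x
    have hx : (ZMod.chineseRemainder h) x = ((x.val : ZMod u), (x.val : ZMod v)) := by
      conv_lhs => rw [← ZMod.natCast_rightInverse x]
      rw [map_natCast]
      rfl
    rw [hx]
    simp only [ZMod.val_natCast]
    rw [hf, hg]
  rw [Finset.sum_congr rfl fun x _ => key x]
  rw [show (∑ x : ZMod (u*v), f ((ZMod.chineseRemainder h) x).1.val * g ((ZMod.chineseRemainder h) x).2.val)
      = ∑ y : ZMod u × ZMod v, f y.1.val * g y.2.val from
    Equiv.sum_comp (ZMod.chineseRemainder h).toEquiv
      (fun y : ZMod u × ZMod v => f y.1.val * g y.2.val)]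
  rw [Fintype.sum_prod_type, Finset.sum_mul_sum]

lemma sum_prod_split {ι : Type*} [DecidableEq ι] (s : Finset ι) (q : ι → ℕ) (F : ι → ℕ → ℚ)
    (hq : ∀ i ∈ s, q i ≠ 0)
    (hcop : ∀ i ∈ s, ∀ j ∈ s, i ≠ j → (q i).Coprime (q j))
    (hF : ∀ i ∈ s, ∀ k, F i (k % q i) = F i k) :
    ∑ k ∈ range (∏ i ∈ s, q i), ∏ i ∈ s, F i k = ∏ i ∈ s, ∑ k ∈ range (q i), F i k := by
  induction s using Finset.induction_on with
  | empty => simp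
  | @insert a s' ha ih =>
    rw [Finset.prod_insert ha, Finset.prod_insert ha]
    have hV : (∏ i ∈ s', q i) ≠ 0 :=
      Finset.prod_ne_zero_iff.mpr fun i hi => hq i (Finset.mem_insert_of_mem hi)
    have hcopa : (q a).Coprime (∏ i ∈ s', q i) :=
      Nat.Coprime.prod_right fun i hi =>
        hcop a (Finset.mem_insert_self a s') i (Finset.mem_insert_of_mem hi)
          (fun he => ha (he ▸ hi))
    have hsplit := sum_mul_split (hq a (Finset.mem_insert_self a s')) hV hcopa
      (F a) (fun k => ∏ i ∈ s', F i k)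
      (hF a (Finset.mem_insert_self a s'))
      (fun k => by
        apply Finset.prod_congr rfl
        intro i hi
        rw [← hF i (Finset.mem_insert_of_mem hi) (k % ∏ i ∈ s', q i),
          Nat.mod_mod_of_dvd _ (Finset.dvd_prod_of_mem q hi),
          hF i (Finset.mem_insert_of_mem hi)])
    rw [Finset.sum_congr rfl fun k _ => Finset.prod_insert ha, hsplit,
      ih (fun i hi => hq i (Finset.mem_insert_of_mem hi))
        (fun i hi j hj hij => hcop i (Finset.mem_insert_of_mem hi) j (Finset.mem_insert_of_mem hj) hij)
        (fun i hi => hF i (Finset.mem_insert_of_mem hi))]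



lemma vs_zero_of_not_dvd {p : ℕ} (hp : p.Prime) {a k : ℕ} (ha : 1 ≤ a)
    (h : ¬ p ^ (a - 1) ∣ k) : vonSterneck k (p ^ a) = 0 := by
  obtain ⟨c, hca, hc⟩ := (Nat.dvd_prime_pow hp).mp (Nat.gcd_dvd_right k (p ^ a))
  have hc2 : c + 2 ≤ a := by
    by_contra hcon
    exact h (dvd_trans (pow_dvd_pow p (by omega)) (hc ▸ Nat.gcd_dvd_left k (p ^ a)))
  unfold vonSterneck
  rw [hc, Nat.pow_div hca hp.pos, moebius_apply_prime_pow hp (by omega)]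
  rw [if_neg (by omega)]
  simp

lemma vs_max_val {p : ℕ} (hp : p.Prime) {a u : ℕ} (ha : 1 ≤ a) (hu : 0 < u) (hup : u < p) :
    vonSterneck (u * p ^ (a - 1)) (p ^ a) = -((p : ℚ) ^ (a - 1)) := by
  have hpa : p ^ a = p * p ^ (a - 1) := by
    conv_lhs => rw [show a = 1 + (a - 1) by omega]
    rw [pow_add, pow_one]
  have hgcd : Nat.gcd (u * p ^ (a - 1)) (p ^ a) = p ^ (a - 1) := by
    rw [hpa, Nat.gcd_mul_right]
    have : Nat.gcd u p = 1 := Nat.Coprime.gcd_eq_one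
      (Nat.coprime_comm.mp (hp.coprime_iff_not_dvd.mpr fun hd => by
        have := Nat.le_of_dvd hu hd; omega))
    rw [this, one_mul]
  unfold vonSterneck
  rw [hgcd, Nat.pow_div (by omega) hp.pos, show a - (a - 1) = 1 by omega, pow_one,
    moebius_apply_prime hp, Nat.totient_prime_pow hp (by omega), Nat.totient_prime hp]
  have h1 : ((p : ℚ) - 1) ≠ 0 := by
    have := hp.one_lt
    intro hcon
    have : (p : ℚ) = 1 := by linarith
    exact_mod_cast absurd this (by exact_mod_cast Nat.ne_of_gt hp.one_lt)
  push_cast [Nat.cast_sub hp.one_lt.le]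
  field_simp

lemma local_sum {p : ℕ} (hp : p.Prime) {a : ℕ} (ha : 1 ≤ a) {r : ℕ} (e : Fin r → ℕ)
    (hle : ∀ j, e j ≤ a) (hex : ∃ j, e j = a) :
    ∑ k ∈ range (p ^ a), ∏ j, vonSterneck k (p ^ e j) =
      (∏ j, (Nat.totient (p ^ e j) : ℚ)) +
        ((p : ℚ) - 1) *
          ∏ j, (if e j = a then -((p : ℚ) ^ (a - 1)) else (Nat.totient (p ^ e j) : ℚ)) := by
  obtain ⟨j0, hj0⟩ := hex
  have hpow_pos : 0 < p ^ (a - 1) := Nat.pow_pos hp.pos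
  -- restrict to multiples of p^(a-1)
  rw [← Finset.sum_filter_of_ne (p := fun k => p ^ (a - 1) ∣ k) (fun k _ hne => by
    by_contra hdvd
    exact hne (Finset.prod_eq_zero (Finset.mem_univ j0) (by rw [hj0]; exact vs_zero_of_not_dvd hp ha hdvd)))]
  have himg : (range (p ^ a)).filter (fun k => p ^ (a - 1) ∣ k) =
      (range p).image (fun u => u * p ^ (a - 1)) := by
    ext k
    simp only [Finset.mem_filter, Finset.mem_range, Finset.mem_image]
    constructor
    · rintro ⟨hk, d, rfl⟩
      refine ⟨d, ?_, by ring⟩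
      by_contra hcon
      have : p * p ^ (a - 1) ≤ p ^ (a - 1) * d := by
        calc p * p ^ (a - 1) ≤ d * p ^ (a - 1) := Nat.mul_le_mul_right _ (by omega)
        _ = p ^ (a - 1) * d := by ring
      have hpa : p ^ a = p * p ^ (a - 1) := by
        conv_lhs => rw [show a = 1 + (a - 1) by omega]; rw [pow_add, pow_one]
      omega
    · rintro ⟨u, hu, rfl⟩
      refine ⟨?_, ⟨u, by ring⟩⟩
      have hpa : p ^ a = p * p ^ (a - 1) := by
        conv_lhs => rw [show a = 1 + (a - 1) by omega]; rw [pow_add, pow_one]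
      rw [hpa]
      exact Nat.mul_lt_mul_of_lt_of_le hu le_rfl hpow_pos
  rw [himg, Finset.sum_image (fun x _ y _ hxy => Nat.eq_of_mul_eq_mul_right hpow_pos hxy)]
  -- split off u = 0
  have hp1 : p = (p - 1) + 1 := by have := hp.pos; omega
  rw [show range p = range ((p - 1) + 1) by rw [← hp1], Finset.sum_range_succ']
  have h0 : ∏ j, vonSterneck (0 * p ^ (a - 1)) (p ^ e j) = ∏ j, (Nat.totient (p ^ e j) : ℚ) :=
    Finset.prod_congr rfl fun j _ => by
      rw [zero_mul]; exact vs_of_dvd (pow_ne_zero _ hp.pos.ne') (dvd_zero _)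
  have hval : ∀ i < p - 1, ∏ j, vonSterneck ((i + 1) * p ^ (a - 1)) (p ^ e j) =
      ∏ j, (if e j = a then -((p : ℚ) ^ (a - 1)) else (Nat.totient (p ^ e j) : ℚ)) := by
    intro i hi
    apply Finset.prod_congr rfl
    intro j _
    by_cases hej : e j = a
    · rw [if_pos hej, hej]
      exact vs_max_val hp ha (Nat.succ_pos i) (by omega)
    · rw [if_neg hej]
      exact vs_of_dvd (pow_ne_zero _ hp.pos.ne')
        (dvd_trans (pow_dvd_pow p (show e j ≤ a - 1 by have := hle j; omega)) (dvd_mul_left _ _))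
  rw [Finset.sum_congr rfl fun i hi => hval i (Finset.mem_range.mp hi), h0,
    Finset.sum_const, Finset.card_range]
  have : ((p - 1 : ℕ) : ℚ) = (p : ℚ) - 1 := by
    push_cast [Nat.cast_sub hp.one_lt.le]; ring
  rw [nsmul_eq_mul, this]
  ring



def locC (p : ℕ) : ℕ → ℕ
  | 0 => 0
  | 1 => 0
  | (n + 2) => if Even n then (p - 1) * locC p (n + 1) + 1 else (p - 1) * locC p (n + 1) - 1

lemma locC_one (p : ℕ) : locC p 1 = 0 := rfl

lemma locC_two (p : ℕ) : locC p 2 = 1 := by simp [locC]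

lemma locC_three (p : ℕ) : locC p 3 = p - 2 := by
  simp [locC, Nat.not_even_one]
  omega

lemma locC_main {p : ℕ} (hp : 2 ≤ p) : ∀ s, 1 ≤ s →
    (Even s → 1 ≤ locC p s) ∧
      ((p : ℚ) - 1) ^ (s - 1) + (-1) ^ s = (p : ℚ) * (locC p s : ℚ) := by
  intro s hs
  induction s, hs using Nat.le_induction with
  | base => exact ⟨fun h => absurd h (by simp), by simp [locC_one]⟩
  | succ s hs ih =>
    obtain ⟨heven, heq⟩ := ih
    obtain ⟨n, rfl⟩ : ∃ n, s = n + 1 := ⟨s - 1, by omega⟩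
    have hcast : ((p : ℚ) - 1) = ((p - 1 : ℕ) : ℚ) := by push_cast [Nat.cast_sub (by omega : 1 ≤ p)]; ring
    by_cases he : Even (n + 1)
    · -- s = n+1 even, next uses ¬ Even n branch gives minus
      have h1 : 1 ≤ locC p (n + 1) := heven he
      have hnotn : ¬ Even n := Nat.even_add_one.mp he
      have hval : locC p (n + 2) = (p - 1) * locC p (n + 1) - 1 := by
        simp [locC, hnotn]
      constructor
      · intro habs
        exact absurd he (by simpa [Nat.even_add_one] using habs)
      · have hge : 1 ≤ (p - 1) * locC p (n + 1) := by
          have : 1 ≤ p - 1 := by omega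
          exact Nat.one_le_iff_ne_zero.mpr (Nat.mul_ne_zero (by omega) (by omega))
        have hc : ((locC p (n + 2) : ℕ) : ℚ) = ((p : ℚ) - 1) * (locC p (n + 1) : ℚ) - 1 := by
          rw [hval]
          push_cast [Nat.cast_sub hge, Nat.cast_sub (by omega : 1 ≤ p)]
          ring
        have hs1 : (-1 : ℚ) ^ (n + 1) = 1 := by
          rcases he with ⟨k, hk⟩
          rw [hk, show k + k = 2 * k by ring, pow_mul]
          norm_num
        have hs2 : (-1 : ℚ) ^ (n + 2) = -1 := by
          rw [pow_succ, hs1]; ring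
        rw [hc, hs2]
        have hprev : ((p : ℚ) - 1) ^ n = (p : ℚ) * (locC p (n + 1) : ℚ) - 1 := by
          have := heq
          rw [hs1, show n + 1 - 1 = n from rfl] at this
          linarith
        have : ((p:ℚ) - 1) ^ (n + 1) = ((p:ℚ) - 1) * ((p:ℚ) * (locC p (n+1) : ℚ) - 1) := by
          rw [pow_succ, hprev]; ring
        rw [show n + 2 - 1 = n + 1 from rfl, this]
        ring
    · -- s = n+1 odd
      have hnn : Even n := by simpa [Nat.even_add_one] using he
      have hval : locC p (n + 2) = (p - 1) * locC p (n + 1) + 1 := by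
        simp [locC, hnn]
      constructor
      · intro _; rw [hval]; omega
      · have hc : ((locC p (n + 2) : ℕ) : ℚ) = ((p : ℚ) - 1) * (locC p (n + 1) : ℚ) + 1 := by
          rw [hval]
          push_cast [Nat.cast_sub (by omega : 1 ≤ p)]
          ring
        have hs1 : (-1 : ℚ) ^ (n + 1) = -1 := by
          rcases hnn with ⟨k, hk⟩
          rw [pow_succ, hk, show k + k = 2 * k by ring, pow_mul]
          norm_num
        have hs2 : (-1 : ℚ) ^ (n + 2) = 1 := by
          rw [pow_succ, hs1]; ring
        rw [hc, hs2]
        have hprev : ((p : ℚ) - 1) ^ n = (p : ℚ) * (locC p (n + 1) : ℚ) + 1 := by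
          have := heq
          rw [hs1, show n + 1 - 1 = n from rfl] at this
          linarith
        have : ((p:ℚ) - 1) ^ (n + 1) = ((p:ℚ) - 1) * ((p:ℚ) * (locC p (n+1) : ℚ) + 1) := by
          rw [pow_succ, hprev]; ring
        rw [show n + 2 - 1 = n + 1 from rfl, this]
        ring

lemma locC_cast {p : ℕ} (hp : 2 ≤ p) {s : ℕ} (hs : 1 ≤ s) :
    ((p : ℚ) - 1) ^ (s - 1) + (-1) ^ s = (p : ℚ) * (locC p s : ℚ) :=
  (locC_main hp s hs).2

lemma locC_two_prime : ∀ s, 1 ≤ s → locC 2 s = if Even s then 1 else 0 := by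
  intro s hs
  induction s, hs using Nat.le_induction with
  | base => simp [locC_one]
  | succ s hs ih =>
    obtain ⟨n, rfl⟩ : ∃ n, s = n + 1 := ⟨s - 1, by omega⟩
    by_cases he : Even n
    · have h1 : ¬ Even (n + 1) := by simp [Nat.even_add_one, he]
      have h2 : Even (n + 2) := by simpa [Nat.even_add_one] using h1
      have hv : locC 2 (n + 2) = 1 * locC 2 (n + 1) + 1 := by simp [locC, he]
      rw [hv, ih, if_neg h1, if_pos h2]
    · have h1 : Even (n + 1) := by simpa [Nat.even_add_one] using he
      have h2 : ¬ Even (n + 2) := by simp [Nat.even_add_one, h1]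
      have hv : locC 2 (n + 2) = 1 * locC 2 (n + 1) - 1 := by simp [locC, he]
      rw [hv, ih, if_pos h1, if_neg h2]

lemma locC_ge_two {p : ℕ} (hp : 3 ≤ p) : ∀ s, 4 ≤ s → 2 ≤ locC p s := by
  intro s hs
  induction s, hs using Nat.le_induction with
  | base =>
    have h4 : locC p 4 = (p - 1) * locC p 3 + 1 := by
      simp [locC]
    rw [h4, locC_three]
    have h1 : 2 ≤ p - 1 := by omega
    have h2 : 1 ≤ p - 2 := by omega
    have := Nat.mul_le_mul h1 h2
    omega
  | succ s hs ih =>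
    have h2 : 2 ≤ locC p s := ih
    obtain ⟨n, rfl⟩ : ∃ n, s = n + 1 := ⟨s - 1, by omega⟩
    have h1 : 2 ≤ p - 1 := by omega
    have h3 := Nat.mul_le_mul h1 h2
    by_cases he : Even n <;> simp [locC, he] <;> omega



lemma totient_pp_eq_one {p x : ℕ} (hp : p.Prime) (hx : 1 ≤ x) :
    Nat.totient (p ^ x) = 1 ↔ p = 2 ∧ x = 1 := by
  rw [Nat.totient_prime_pow hp (by omega)]
  have h2 := hp.two_le
  constructor
  · intro h
    have ha1 : p ^ (x - 1) = 1 := Nat.eq_one_of_mul_eq_one_right h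
    have ha2 : p - 1 = 1 := Nat.eq_one_of_mul_eq_one_left h
    have hx1 : x - 1 = 0 := by
      by_contra hcc
      have := Nat.one_lt_pow hcc (show 1 < p by omega)
      omega
    exact ⟨by omega, by omega⟩
  · rintro ⟨rfl, rfl⟩
    simp

lemma key {p : ℕ} (hp : p.Prime) (A : Multiset ℕ) (h1 : ∀ x ∈ A, 1 ≤ x) {a : ℕ}
    (hle : ∀ x ∈ A, x ≤ a) (ha : 1 ≤ a) (hmem : a ∈ A) :
    ((A.filter (· ≠ a)).map fun x => Nat.totient (p ^ x)).prod * locC p (A.count a) *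
        p ^ ((a - 1) * (A.count a - 2)) = 1 ↔
      A = Multiset.replicate 2 a ∨ (p = 3 ∧ A = Multiset.replicate 3 1) ∨
        (p = 2 ∧ A = Multiset.replicate 2 a + Multiset.replicate (Multiset.card A - 2) 1 ∧
          3 ≤ Multiset.card A ∧ (a = 1 → Even (Multiset.card A))) := by
  have hp2 := hp.two_le
  set s := A.count a with hs
  have hs1 : 1 ≤ s := Multiset.count_pos.mpr hmem
  constructor
  · intro hLHS
    have hXY := Nat.eq_one_of_mul_eq_one_right hLHS
    have hPn : (Multiset.map (fun x => Nat.totient (p ^ x)) (A.filter (· ≠ a))).prod = 1 :=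
      Nat.eq_one_of_mul_eq_one_right hXY
    have hc : locC p s = 1 := Nat.eq_one_of_mul_eq_one_left hXY
    have hpow : (a - 1) * (s - 2) = 0 := by
      have hZ := Nat.eq_one_of_mul_eq_one_left hLHS
      by_contra hne
      have := Nat.one_lt_pow hne (show 1 < p by omega)
      omega
    -- structure of non-max elements
    have hstruct : ∀ x ∈ A, x = a ∨ (p = 2 ∧ x = 1) := by
      intro x hx
      by_cases hxa : x = a
      · exact Or.inl hxa
      · right
        have hxf : x ∈ A.filter (· ≠ a) := Multiset.mem_filter.mpr ⟨hx, hxa⟩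
        have : Nat.totient (p ^ x) ∣ 1 := hPn ▸ Multiset.dvd_prod (Multiset.mem_map_of_mem _ hxf)
        exact (totient_pp_eq_one hp (h1 x hx)).mp (Nat.eq_one_of_dvd_one this)
    by_cases hp2' : p = 2
    · -- p = 2 case
      subst hp2'
      have hseven : Even s := by
        have := locC_two_prime s hs1
        rw [this] at hc
        by_contra hodd
        rw [if_neg hodd] at hc
        omega
      have has2 : a = 1 ∨ s = 2 := by
        obtain ⟨k, hk⟩ := hseven
        rcases Nat.mul_eq_zero.mp hpow with h | h
        · left; omega
        · right; omega
      by_cases ha1 : a = 1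
      · subst ha1
        have hA : A = Multiset.replicate (Multiset.card A) 1 :=
          Multiset.eq_replicate_card.mpr fun b hb => by
            have := h1 b hb; have := hle b hb; omega
        have hcard : Multiset.card A = s := by
          rw [hs]
          conv_rhs => rw [hA]
          rw [Multiset.count_replicate_self]
        by_cases h2 : Multiset.card A = 2
        · left; rw [hA, h2]
        · right; right
          have h3 : 3 ≤ Multiset.card A := by
            obtain ⟨k, hk⟩ := hseven
            omega
          refine ⟨rfl, ?_, h3, fun _ => hcard ▸ hseven⟩
          rw [← Multiset.replicate_add]
          rw [show 2 + (Multiset.card A - 2) = Multiset.card A by omega]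
          exact hA
      · -- a ≥ 2
        have hs2 : s = 2 := by rcases has2 with h | h; exact absurd h ha1; exact h
        have hfe : A.filter (· = a) = Multiset.replicate 2 a := by
          rw [Multiset.filter_eq', ← hs, hs2]
        have hfne : A.filter (· ≠ a) = Multiset.replicate (Multiset.card A - 2) 1 := by
          apply Multiset.eq_replicate.mpr
          constructor
          · have := congrArg Multiset.card (Multiset.filter_add_not (· = a) A)
            rw [Multiset.card_add] at this
            rw [hfe] at this
            simp only [Multiset.card_replicate] at this
            have : 2 + Multiset.card (Multiset.filter (fun x => ¬ x = a) A) = Multiset.card A := this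
            simp only [ne_eq]
            omega
          · intro b hb
            have hb' := Multiset.mem_filter.mp hb
            rcases hstruct b hb'.1 with h | h
            · exact absurd h hb'.2
            · exact h.2
        have hA : A = Multiset.replicate 2 a + Multiset.replicate (Multiset.card A - 2) 1 := by
          conv_lhs => rw [← Multiset.filter_add_not (· = a) A]
          rw [hfe]
          congr 1
        by_cases h2 : Multiset.card A = 2
        · left
          rw [hA, h2]
          simp
        · right; right
          have hcge : 2 ≤ Multiset.card A := by
            have := congrArg Multiset.card hA
            simp only [Multiset.card_add, Multiset.card_replicate] at this
            omega
          exact ⟨rfl, hA, by omega, fun h => absurd h ha1⟩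
    · -- p odd: all elements equal a
      have hall : ∀ x ∈ A, x = a := by
        intro x hx
        rcases hstruct x hx with h | h
        · exact h
        · exact absurd h.1 hp2'
      have hA : A = Multiset.replicate (Multiset.card A) a := Multiset.eq_replicate_card.mpr hall
      have hcard : Multiset.card A = s := by
        rw [hs]
        conv_rhs => rw [hA]
        rw [Multiset.count_replicate_self]
      -- locC p s = 1 forces s = 2 or (p = 3, s = 3)
      have hp3 : 3 ≤ p := by omega
      have hsval : s = 2 ∨ (p = 3 ∧ s = 3) := by
        rcases Nat.lt_or_ge s 4 with h4 | h4
        · interval_cases s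
          · rw [locC_one] at hc; omega
          · left; rfl
          · right
            rw [locC_three] at hc
            exact ⟨by omega, rfl⟩
        · have := locC_ge_two hp3 s h4
          omega
      rcases hsval with h | ⟨hp3', h3⟩
      · left
        rw [hA, hcard, h]
      · right; left
        have ha1 : a = 1 := by
          have : (a - 1) * (3 - 2) = 0 := by rw [← h3]; exact hpow
          omega
        subst ha1
        exact ⟨hp3', by rw [hA, hcard, h3]⟩
  · -- backward
    intro hRHS
    rcases hRHS with h | ⟨hp3, h⟩ | ⟨hp2', hA, hcard, heven⟩
    · -- A = replicate 2 a
      have hcount : s = 2 := by rw [hs, h, Multiset.count_replicate_self]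
      have hfil : A.filter (· ≠ a) = 0 := Multiset.filter_eq_nil.mpr (by
        intro x hx
        simp only [ne_eq, Decidable.not_not]
        exact Multiset.eq_of_mem_replicate (h ▸ hx))
      rw [hfil, hcount, locC_two]
      simp
    · -- p = 3, A = replicate 3 1
      subst hp3
      have ha1 : a = 1 := Multiset.eq_of_mem_replicate (h ▸ hmem)
      subst ha1
      have hcount : s = 3 := by rw [hs, h, Multiset.count_replicate_self]
      have hfil : A.filter (· ≠ 1) = 0 := Multiset.filter_eq_nil.mpr (by
        intro x hx
        simp only [ne_eq, Decidable.not_not]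
        exact Multiset.eq_of_mem_replicate (h ▸ hx))
      rw [hfil, hcount, locC_three]
      simp
    · -- p = 2 case
      subst hp2'
      by_cases ha1 : a = 1
      · subst ha1
        have hA' : A = Multiset.replicate (Multiset.card A) 1 := by
          conv_lhs => rw [hA, ← Multiset.replicate_add]
          rw [show 2 + (Multiset.card A - 2) = Multiset.card A by omega]
        have hcount : s = Multiset.card A := by
          rw [hs]
          conv_lhs => rw [hA']
          rw [Multiset.count_replicate_self]
        have hfil : A.filter (· ≠ 1) = 0 := Multiset.filter_eq_nil.mpr (by
          intro x hx
          simp only [ne_eq, Decidable.not_not]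
          exact Multiset.eq_of_mem_replicate (hA' ▸ hx))
        rw [hfil, hcount, locC_two_prime _ (by omega), if_pos (heven rfl)]
        simp
      · -- a ≥ 2
        have hcount : s = 2 := by
          rw [hs]
          conv_lhs => rw [hA]
          rw [Multiset.count_add, Multiset.count_replicate_self, Multiset.count_replicate,
            if_neg (by omega : ¬ (1 = a))]
        have hfil : A.filter (· ≠ a) = Multiset.replicate (Multiset.card A - 2) 1 := by
          conv_lhs => rw [hA]
          rw [Multiset.filter_add]
          have e1 : (Multiset.replicate 2 a).filter (· ≠ a) = 0 :=
            Multiset.filter_eq_nil.mpr (by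
              intro x hx
              simp only [ne_eq, Decidable.not_not]
              exact Multiset.eq_of_mem_replicate hx)
          have e2 : (Multiset.replicate (Multiset.card A - 2) 1).filter (· ≠ a) =
              Multiset.replicate (Multiset.card A - 2) 1 :=
            Multiset.filter_eq_self.mpr (by
              intro x hx
              have := Multiset.eq_of_mem_replicate hx
              simp only [ne_eq, this]
              omega)
          rw [e1, e2, zero_add]
        rw [hfil, hcount, locC_two]
        rw [Multiset.map_replicate, Multiset.prod_replicate]
        norm_num [Nat.totient_two]



lemma prod_split {r : ℕ} (e : Fin r → ℕ) {a : ℕ} (ha : 1 ≤ a) (F : ℕ → ℚ) (hF : F 0 = 1) :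
    ∏ j : Fin r, F (e j) =
      F a ^ (Multiset.count a (Multiset.filter (fun x => 1 ≤ x) (Multiset.map e Finset.univ.val))) *
        ((Multiset.filter (fun x => 1 ≤ x) (Multiset.map e Finset.univ.val)).filter (· ≠ a)
          |>.map F).prod := by
  set B := Multiset.map e Finset.univ.val with hB
  set A := Multiset.filter (fun x => 1 ≤ x) B with hA
  have h0 : ∏ j : Fin r, F (e j) = (B.map F).prod := by
    rw [hB, Multiset.map_map]
    rfl
  rw [h0]
  conv_lhs => rw [← Multiset.filter_add_not (fun x => 1 ≤ x) B]
  rw [Multiset.map_add, Multiset.prod_add]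
  have h2 : (Multiset.map F (Multiset.filter (fun x => ¬ 1 ≤ x) B)).prod = 1 := by
    apply Multiset.prod_eq_one
    intro x hx
    obtain ⟨y, hy, rfl⟩ := Multiset.mem_map.mp hx
    have : y = 0 := by
      have := (Multiset.mem_filter.mp hy).2
      omega
    rw [this, hF]
  rw [h2, mul_one]
  conv_lhs => rw [← Multiset.filter_add_not (· = a) (Multiset.filter (fun x => 1 ≤ x) B)]
  rw [Multiset.map_add, Multiset.prod_add, Multiset.filter_eq', Multiset.map_replicate,
    Multiset.prod_replicate]

lemma qcalc {p : ℕ} (hp : p.Prime) {a s : ℕ} (ha : 1 ≤ a) (hs : 1 ≤ s) :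
    ((Nat.totient (p ^ a) : ℚ)) ^ s + ((p : ℚ) - 1) * (-((p : ℚ) ^ (a - 1))) ^ s =
      ((p : ℚ) ^ a * (Nat.totient (p ^ a) : ℚ)) * (locC p s : ℚ) *
        (p : ℚ) ^ ((a - 1) * (s - 2)) := by
  have hphi : (Nat.totient (p ^ a) : ℚ) = ((p : ℚ) - 1) * (p : ℚ) ^ (a - 1) := by
    rw [Nat.totient_prime_pow hp (by omega)]
    push_cast [Nat.cast_sub hp.one_lt.le]
    ring
  rcases Nat.lt_or_ge s 2 with h2 | h2
  · have hs1 : s = 1 := by omega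
    subst hs1
    rw [locC_one]
    push_cast
    rw [hphi]
    ring
  · obtain ⟨t, rfl⟩ : ∃ t, s = t + 2 := ⟨s - 2, by omega⟩
    obtain ⟨b, rfl⟩ : ∃ b, a = b + 1 := ⟨a - 1, by omega⟩
    have key := locC_cast hp.two_le (show 1 ≤ t + 2 by omega)
    simp only [show b + 1 - 1 = b from rfl, show t + 2 - 1 = t + 1 from rfl,
      show t + 2 - 2 = t from rfl] at key ⊢
    rw [hphi]
    simp only [show b + 1 - 1 = b from rfl]
    have e1 : ((p : ℚ) ^ b) ^ (t + 2) = (p : ℚ) ^ (b * t) * (p : ℚ) ^ b * (p : ℚ) ^ b := by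
      rw [← pow_mul, show b * (t + 2) = b * t + b + b by ring, pow_add, pow_add]
    have e2 : ((p : ℚ)) ^ (b + 1) = (p : ℚ) ^ b * p := by
      rw [pow_succ]
    have e3 : (-((p : ℚ) ^ b)) ^ (t + 2) = (-1) ^ (t + 2) * ((p : ℚ) ^ b) ^ (t + 2) := by
      rw [neg_pow]
    have e4 : (((p : ℚ) - 1) * (p : ℚ) ^ b) ^ (t + 2) =
        ((p : ℚ) - 1) ^ (t + 2) * ((p : ℚ) ^ b) ^ (t + 2) := by
      rw [mul_pow]
    have e5 : ((p : ℚ) - 1) ^ (t + 2) = ((p : ℚ) - 1) ^ (t + 1) * ((p : ℚ) - 1) := by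
      rw [← pow_succ]
    rw [e4, e3, e5, e2, e1]
    linear_combination (((p : ℚ)) ^ (b * t) * (p : ℚ) ^ b * (p : ℚ) ^ b * ((p : ℚ) - 1)) * key



lemma vs_one (k : ℕ) : vonSterneck k 1 = 1 := by
  rw [vs_of_dvd one_ne_zero (one_dvd k), Nat.totient_one, Nat.cast_one]

lemma vs_prod (k : ℕ) {ι : Type*} (s : Finset ι) (q : ι → ℕ) (hq : ∀ i ∈ s, q i ≠ 0)
    (hcop : ∀ i ∈ s, ∀ j ∈ s, i ≠ j → (q i).Coprime (q j)) :
    vonSterneck k (∏ i ∈ s, q i) = ∏ i ∈ s, vonSterneck k (q i) := by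
  classical
  induction s using Finset.induction_on with
  | empty => simpa using vs_one k
  | @insert a s' ha ih =>
    rw [Finset.prod_insert ha, Finset.prod_insert ha,
      vs_mul k (hq a (mem_insert_self a s'))
        (Finset.prod_ne_zero_iff.mpr fun i hi => hq i (mem_insert_of_mem hi))
        (Nat.Coprime.prod_right fun i hi =>
          hcop a (mem_insert_self a s') i (mem_insert_of_mem hi) fun he => ha (he ▸ hi)),
      ih (fun i hi => hq i (mem_insert_of_mem hi))
        (fun i hi j hj hij => hcop i (mem_insert_of_mem hi) j (mem_insert_of_mem hj) hij)]

lemma totient_prod {ι : Type*} (s : Finset ι) (q : ι → ℕ)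
    (hcop : ∀ i ∈ s, ∀ j ∈ s, i ≠ j → (q i).Coprime (q j)) :
    Nat.totient (∏ i ∈ s, q i) = ∏ i ∈ s, Nat.totient (q i) := by
  classical
  induction s using Finset.induction_on with
  | empty => simp
  | @insert a s' ha ih =>
    rw [Finset.prod_insert ha, Finset.prod_insert ha,
      Nat.totient_mul (Nat.Coprime.prod_right fun i hi =>
        hcop a (mem_insert_self a s') i (mem_insert_of_mem hi) fun he => ha (he ▸ hi)),
      ih (fun i hi j hj hij => hcop i (mem_insert_of_mem hi) j (mem_insert_of_mem hj) hij)]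

lemma eq_prod_primeFactors {n M : ℕ} (hn : n ≠ 0) (hM : M ≠ 0) (h : n ∣ M) :
    n = ∏ p ∈ M.primeFactors, p ^ n.factorization p := by
  conv_lhs => rw [← Nat.factorization_prod_pow_eq_self hn]
  rw [Nat.prod_factorization_eq_prod_primeFactors]
  apply Finset.prod_subset (Nat.primeFactors_mono h hM)
  intro x _ hx
  have : n.factorization x = 0 := by
    rw [← Nat.support_factorization] at hx
    exact Finsupp.notMem_support_iff.mp hx
  rw [this, pow_zero]

lemma exists_factorization_eq {r : ℕ} (m : Fin r → ℕ) (hm : ∀ j, 0 < m j) {p : ℕ}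
    (hp : p ∈ (Finset.univ.lcm m).primeFactors) :
    ∃ j, (m j).factorization p = (Finset.univ.lcm m).factorization p := by
  set M := Finset.univ.lcm m with hMdef
  have hM0 : M ≠ 0 := by
    rw [hMdef]
    intro hc
    rcases r with _ | r'
    · simp [Finset.lcm] at hc
    · obtain ⟨j, _, hj⟩ := (Finset.lcm_eq_zero_iff).mp hc
      exact (hm j).ne' hj
  have hpp := Nat.prime_of_mem_primeFactors hp
  have hdvd : ∀ j, m j ∣ M := fun j => Finset.dvd_lcm (mem_univ j)
  set a := M.factorization p with hadef
  have ha1 : 1 ≤ a := hpp.factorization_pos_of_dvd hM0 (Nat.dvd_of_mem_primeFactors hp)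
  by_contra hcon
  push_neg at hcon
  have hle : ∀ j, (m j).factorization p ≤ a - 1 := by
    intro j
    have := (Nat.factorization_le_iff_dvd (hm j).ne' hM0).mpr (hdvd j) p
    have := hcon j
    omega
  set N := p ^ (a - 1) * ordCompl[p] M with hNdef
  have hN0 : N ≠ 0 :=
    Nat.mul_ne_zero (pow_ne_zero _ hpp.pos.ne') (Nat.ordCompl_pos p hM0).ne'
  have hdvdN : ∀ j, m j ∣ N := by
    intro j
    rw [← Nat.factorization_le_iff_dvd (hm j).ne' hN0]
    intro q
    rw [hNdef, Nat.factorization_mul (pow_ne_zero _ hpp.pos.ne') (Nat.ordCompl_pos p hM0).ne',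
      Finsupp.add_apply, Nat.factorization_ordCompl, hpp.factorization_pow, Finsupp.single_apply]
    by_cases hqp : q = p
    · subst hqp
      rw [Finsupp.erase_same, if_pos rfl]
      simpa using hle j
    · rw [Finsupp.erase_ne hqp, if_neg (by omega : ¬ p = q)]
      have := (Nat.factorization_le_iff_dvd (hm j).ne' hM0).mpr (hdvd j) q
      simpa using this
  have hMN : M ∣ N := Finset.lcm_dvd fun j _ => hdvdN j
  have := (Nat.factorization_le_iff_dvd hM0 hN0).mpr hMN p
  rw [hNdef, Nat.factorization_mul (pow_ne_zero _ hpp.pos.ne') (Nat.ordCompl_pos p hM0).ne',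
    Finsupp.add_apply, Nat.factorization_ordCompl, hpp.factorization_pow, Finsupp.single_apply,
    Finsupp.erase_same, if_pos rfl] at this
  omega


lemma local_eval {p : ℕ} (hp : p.Prime) {a : ℕ} (ha : 1 ≤ a) {r : ℕ} (e : Fin r → ℕ)
    (hle : ∀ j, e j ≤ a) (hex : ∃ j, e j = a) :
    ∑ k ∈ range (p ^ a), ∏ j, vonSterneck k (p ^ e j) =
      ((p ^ a * Nat.totient (p ^ a) : ℕ) : ℚ) *
        ((((Multiset.filter (fun x => 1 ≤ x) (Multiset.map e Finset.univ.val)).filter (· ≠ a)).map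
              (fun x => Nat.totient (p ^ x))).prod *
            locC p
              (Multiset.count a (Multiset.filter (fun x => 1 ≤ x) (Multiset.map e Finset.univ.val))) *
            p ^ ((a - 1) *
              (Multiset.count a (Multiset.filter (fun x => 1 ≤ x) (Multiset.map e Finset.univ.val)) - 2)) : ℕ) := by
  set A := Multiset.filter (fun x => 1 ≤ x) (Multiset.map e Finset.univ.val) with hA
  have hmemA : a ∈ A := by
    obtain ⟨j0, hj0⟩ := hex
    rw [hA]
    exact Multiset.mem_filter.mpr
      ⟨Multiset.mem_map.mpr ⟨j0, by simp, hj0⟩, ha⟩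
  have hs1 : 1 ≤ Multiset.count a A := Multiset.count_pos.mpr hmemA
  rw [local_sum hp ha e hle hex]
  have hsplit1 := prod_split e ha (fun x => (Nat.totient (p ^ x) : ℚ)) (by simp)
  have hsplit2 := prod_split e ha
    (fun x => if x = a then -((p : ℚ) ^ (a - 1)) else (Nat.totient (p ^ x) : ℚ))
    (by have h0 : ¬ ((0:ℕ) = a) := by omega
        simp [h0])
  simp only [if_true] at hsplit1 hsplit2
  rw [hsplit1, hsplit2]
  have hmapeq : (Multiset.map
        (fun x => if x = a then -((p : ℚ) ^ (a - 1)) else (Nat.totient (p ^ x) : ℚ))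
        (A.filter (· ≠ a))) =
      Multiset.map (fun x => (Nat.totient (p ^ x) : ℚ)) (A.filter (· ≠ a)) := by
    apply Multiset.map_congr rfl
    intro x hx
    rw [if_neg (Multiset.mem_filter.mp hx).2]
  rw [hmapeq]
  have hQ : (Multiset.map (fun x => (Nat.totient (p ^ x) : ℚ)) (A.filter (· ≠ a))).prod =
      (((A.filter (· ≠ a)).map (fun x => Nat.totient (p ^ x))).prod : ℕ) := by
    rw [Nat.cast_multiset_prod, Multiset.map_map]
    rfl
  rw [hQ]
  simp only [Nat.cast_mul, Nat.cast_pow]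
  linear_combination
    ((((A.filter (· ≠ a)).map (fun x => Nat.totient (p ^ x))).prod : ℕ) : ℚ) *
      qcalc hp ha hs1


end OrbE

open OrbE Finset in
theorem orbE_eq_totient_iff {r : ℕ} (m : Fin r → ℕ) (hm : ∀ j, 0 < m j) :
    orbE m = (Nat.totient (Finset.univ.lcm m) : ℚ) ↔
      ∀ p ∈ (Finset.univ.lcm m).primeFactors,
        (posExps m p = Multiset.replicate 2 ((Finset.univ.lcm m).factorization p)) ∨
        (p = 3 ∧ posExps m p = Multiset.replicate 3 1) ∨
        (p = 2 ∧
          posExps m p =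
            Multiset.replicate 2 ((Finset.univ.lcm m).factorization p) +
              Multiset.replicate (Multiset.card (posExps m p) - 2) 1 ∧
          3 ≤ Multiset.card (posExps m p) ∧
          ((Finset.univ.lcm m).factorization p = 1 → Even (Multiset.card (posExps m p)))) := by
  classical
  set M := Finset.univ.lcm m with hMdef
  have hM0 : M ≠ 0 := by
    intro hc
    obtain ⟨j, _, hj⟩ := Finset.lcm_eq_zero_iff.mp hc
    exact (hm j).ne' hj
  have hM0' : (M : ℚ) ≠ 0 := Nat.cast_ne_zero.mpr hM0
  have hdvd : ∀ j, m j ∣ M := fun j => Finset.dvd_lcm (Finset.mem_univ j)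
  have hprime : ∀ p ∈ M.primeFactors, p.Prime := fun p hp => Nat.prime_of_mem_primeFactors hp
  have ha1 : ∀ p ∈ M.primeFactors, 1 ≤ M.factorization p := fun p hp =>
    (Nat.prime_of_mem_primeFactors hp).factorization_pos_of_dvd hM0
      (Nat.dvd_of_mem_primeFactors hp)
  have hle : ∀ p, ∀ j, (m j).factorization p ≤ M.factorization p := fun p j =>
    (Nat.factorization_le_iff_dvd (hm j).ne' hM0).mpr (hdvd j) p
  have hex : ∀ p ∈ M.primeFactors, ∃ j, (m j).factorization p = M.factorization p :=
    fun p hp => exists_factorization_eq m hm hp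
  -- Step A : Icc to range
  have hstepA : ∑ k ∈ Finset.Icc 1 M, ∏ j, vonSterneck k (m j)
      = ∑ k ∈ range M, ∏ j, vonSterneck k (m j) := by
    have hM1 : 1 ≤ M := Nat.one_le_iff_ne_zero.mpr hM0
    have hf0 : ∏ j, vonSterneck M (m j) = ∏ j, vonSterneck 0 (m j) :=
      Finset.prod_congr rfl fun j _ => by
        rw [vs_of_dvd (hm j).ne' (hdvd j), vs_of_dvd (hm j).ne' (dvd_zero _)]
    rw [← Finset.Ico_add_one_right_eq_Icc, Finset.sum_Ico_succ_top hM1, Finset.range_eq_Ico,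
      Finset.sum_eq_sum_Ico_succ_bot (by omega : 0 < M), hf0]
    ring
  -- Step C : factor the summand over primes
  have hstepC : ∀ k, ∏ j, vonSterneck k (m j)
      = ∏ p ∈ M.primeFactors, ∏ j, vonSterneck k (p ^ (m j).factorization p) := by
    intro k
    rw [Finset.prod_comm]
    refine Finset.prod_congr rfl fun j _ => ?_
    conv_lhs => rw [eq_prod_primeFactors (hm j).ne' hM0 (hdvd j)]
    exact vs_prod k _ _
      (fun p hp => pow_ne_zero _ (hprime p hp).pos.ne')
      (fun p hp q hq hpq =>
        ((Nat.coprime_primes (hprime p hp) (hprime q hq)).mpr hpq).pow _ _)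
  -- CRT
  have hMfact : M = ∏ p ∈ M.primeFactors, p ^ M.factorization p :=
    eq_prod_primeFactors hM0 hM0 dvd_rfl
  have hcrt : ∑ k ∈ range M, ∏ p ∈ M.primeFactors, ∏ j, vonSterneck k (p ^ (m j).factorization p)
      = ∏ p ∈ M.primeFactors,
          ∑ k ∈ range (p ^ M.factorization p), ∏ j, vonSterneck k (p ^ (m j).factorization p) := by
    rw [show range M = range (∏ p ∈ M.primeFactors, p ^ M.factorization p) by rw [← hMfact]]
    exact sum_prod_split _ _ _
      (fun p hp => pow_ne_zero _ (hprime p hp).pos.ne')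
      (fun p hp q hq hpq =>
        ((Nat.coprime_primes (hprime p hp) (hprime q hq)).mpr hpq).pow _ _)
      (fun p hp k => Finset.prod_congr rfl fun j _ =>
        vs_mod (pow_dvd_pow p (hle p j)))
  -- local evaluation
  have hloc : ∀ p ∈ M.primeFactors,
      ∑ k ∈ range (p ^ M.factorization p), ∏ j, vonSterneck k (p ^ (m j).factorization p)
        = ((p ^ M.factorization p * Nat.totient (p ^ M.factorization p) : ℕ) : ℚ) *
          ((((posExps m p).filter (· ≠ M.factorization p)).map
                (fun x => Nat.totient (p ^ x))).prod *
              locC p ((posExps m p).count (M.factorization p)) *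
              p ^ ((M.factorization p - 1) * ((posExps m p).count (M.factorization p) - 2)) : ℕ) :=
    fun p hp => local_eval (hprime p hp) (ha1 p hp) _ (hle p) (hex p hp)
  -- value of orbE
  have hE : orbE m = (∏ p ∈ M.primeFactors,
      (((p ^ M.factorization p * Nat.totient (p ^ M.factorization p) : ℕ) : ℚ) *
        ((((posExps m p).filter (· ≠ M.factorization p)).map
              (fun x => Nat.totient (p ^ x))).prod *
            locC p ((posExps m p).count (M.factorization p)) *
            p ^ ((M.factorization p - 1) * ((posExps m p).count (M.factorization p) - 2)) : ℕ)))
      / (M : ℚ) := by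
    unfold orbE
    rw [← hMdef, hstepA, Finset.sum_congr rfl fun k _ => hstepC k, hcrt,
      Finset.prod_congr rfl hloc]
  -- totient of M as a product
  have h1 : Nat.totient M = ∏ p ∈ M.primeFactors, Nat.totient (p ^ M.factorization p) := by
    conv_lhs => rw [hMfact]
    exact totient_prod _ _ (fun p hp q hq hpq =>
      ((Nat.coprime_primes (hprime p hp) (hprime q hq)).mpr hpq).pow _ _)
  have hN' : ∏ p ∈ M.primeFactors, (p ^ M.factorization p * Nat.totient (p ^ M.factorization p))
      = M * Nat.totient M := by
    rw [Finset.prod_mul_distrib, ← hMfact, ← h1]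
  have hphiM : (Nat.totient M : ℚ) * (M : ℚ) =
      ∏ p ∈ M.primeFactors, ((p ^ M.factorization p * Nat.totient (p ^ M.factorization p) : ℕ) : ℚ) := by
    rw [← Nat.cast_prod, hN']
    push_cast
    ring
  have hL0 : (∏ p ∈ M.primeFactors,
      ((p ^ M.factorization p * Nat.totient (p ^ M.factorization p) : ℕ) : ℚ)) ≠ 0 := by
    apply Finset.prod_ne_zero_iff.mpr
    intro p hp
    have h1' : 0 < p ^ M.factorization p := pow_pos (hprime p hp).pos _
    have h2' : 0 < Nat.totient (p ^ M.factorization p) := Nat.totient_pos.mpr h1'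
    positivity
  have hmain : orbE m = (Nat.totient M : ℚ) ↔
      (∏ p ∈ M.primeFactors,
        ((((posExps m p).filter (· ≠ M.factorization p)).map
              (fun x => Nat.totient (p ^ x))).prod *
            locC p ((posExps m p).count (M.factorization p)) *
            p ^ ((M.factorization p - 1) * ((posExps m p).count (M.factorization p) - 2)) : ℕ)) = 1 := by
    rw [hE, div_eq_iff hM0', Finset.prod_mul_distrib, hphiM]
    constructor
    · intro h
      have h2 : (∏ p ∈ M.primeFactors,
          ((p ^ M.factorization p * Nat.totient (p ^ M.factorization p) : ℕ) : ℚ)) *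
          (∏ p ∈ M.primeFactors, (((((posExps m p).filter (· ≠ M.factorization p)).map
              (fun x => Nat.totient (p ^ x))).prod *
            locC p ((posExps m p).count (M.factorization p)) *
            p ^ ((M.factorization p - 1) * ((posExps m p).count (M.factorization p) - 2)) : ℕ) : ℚ)) =
          (∏ p ∈ M.primeFactors,
          ((p ^ M.factorization p * Nat.totient (p ^ M.factorization p) : ℕ) : ℚ)) * 1 := by
        rw [mul_one]; exact h
      have h3 := mul_left_cancel₀ hL0 h2
      exact_mod_cast h3
    · intro h
      have h2 : (∏ p ∈ M.primeFactors, (((((posExps m p).filter (· ≠ M.factorization p)).map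
              (fun x => Nat.totient (p ^ x))).prod *
            locC p ((posExps m p).count (M.factorization p)) *
            p ^ ((M.factorization p - 1) * ((posExps m p).count (M.factorization p) - 2)) : ℕ) : ℚ))
          = 1 := by exact_mod_cast h
      rw [h2, mul_one]
  rw [hmain]
  -- prod over primes equal one iff each equals one
  have hiff : (∏ p ∈ M.primeFactors,
      ((((posExps m p).filter (· ≠ M.factorization p)).map
            (fun x => Nat.totient (p ^ x))).prod *
          locC p ((posExps m p).count (M.factorization p)) *
          p ^ ((M.factorization p - 1) * ((posExps m p).count (M.factorization p) - 2)) : ℕ)) = 1 ↔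
      ∀ p ∈ M.primeFactors,
        ((((posExps m p).filter (· ≠ M.factorization p)).map
              (fun x => Nat.totient (p ^ x))).prod *
            locC p ((posExps m p).count (M.factorization p)) *
            p ^ ((M.factorization p - 1) * ((posExps m p).count (M.factorization p) - 2)) : ℕ) = 1 := by
    constructor
    · intro h p hp
      have hdp := Finset.dvd_prod_of_mem (fun p =>
        ((((posExps m p).filter (· ≠ M.factorization p)).map
              (fun x => Nat.totient (p ^ x))).prod *
            locC p ((posExps m p).count (M.factorization p)) *
            p ^ ((M.factorization p - 1) * ((posExps m p).count (M.factorization p) - 2)) : ℕ)) hp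
      rw [h] at hdp
      exact Nat.eq_one_of_dvd_one hdp
    · exact Finset.prod_eq_one
  rw [hiff]
  apply forall₂_congr
  intro p hp
  have hA1 : ∀ x ∈ posExps m p, 1 ≤ x := fun x hx => (Multiset.mem_filter.mp hx).2
  have hAle : ∀ x ∈ posExps m p, x ≤ M.factorization p := by
    intro x hx
    obtain ⟨j, _, rfl⟩ := Multiset.mem_map.mp (Multiset.mem_filter.mp hx).1
    exact hle p j
  have hAmem : M.factorization p ∈ posExps m p := by
    obtain ⟨j, hj⟩ := hex p hp
    exact Multiset.mem_filter.mpr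
      ⟨Multiset.mem_map.mpr ⟨j, by simp, hj⟩, by
        have := ha1 p hp; omega⟩
  exact key (hprime p hp) (posExps m p) hA1 hAle (ha1 p hp) hAmem
end
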